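/- arXiv:0901.2951 — 5 statements merged into one kernel-verified Lean document; each statement's English description precedes it below -/
import Mathlib

section
/- Suppose X_N is an exchangeable ensemble of size N with values in ℝ^m, D_N is an exchangeable ensemble of size N with values in ℝ^d, and the random matrices X_N and D_N are independent. Let F : ℝ^{m×N} × ℝ^m × ℝ^d → ℝ^n be measurable and permutation invariant in its first argument, i.e., F(X_N Π, x, d) = F(X_N, x, d) for every N×N permutation matrix Π. Then the ensemble Y_N with members Y_{Ni} = F(X_N, X_{Ni}, D_{Ni}), i = 1,…,N, is exchangeable. -/
open MeasureTheory ProbabilityTheory Matrix Filter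
open scoped ENNReal NNReal

noncomputable section

variable {Ω : Type*} [MeasureSpace Ω] [IsProbabilityMeasure (ℙ : Measure Ω)]

/-- A vector in `ℝ^n` viewed as an element of Euclidean space, so that `‖toEuc x‖`
is the Euclidean norm of `x`. -/
def toEuc {n : ℕ} (x : Fin n → ℝ) : EuclideanSpace ℝ (Fin n) :=
  (WithLp.equiv 2 (Fin n → ℝ)).symm x

/-- A matrix viewed as a continuous linear map between Euclidean spaces, so that
`‖opCLM M‖` is the operator (spectral) norm of `M` induced by the Euclidean norm. -/
def opCLM {m n : ℕ} (M : Matrix (Fin m) (Fin n) ℝ) :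
    EuclideanSpace ℝ (Fin n) →L[ℝ] EuclideanSpace ℝ (Fin m) :=
  LinearMap.toContinuousLinearMap (Matrix.toEuclideanLin M)

/-- The stochastic `L^p` norm `(E ‖X‖^p)^(1/p)` (Euclidean norm) of a random vector. -/
def vLp {n : ℕ} (p : ℝ) (X : Ω → Fin n → ℝ) : ℝ≥0∞ :=
  eLpNorm (fun ω => toEuc (X ω)) (ENNReal.ofReal p) ℙ

/-- The stochastic `L^p` norm `(E ‖X‖^p)^(1/p)` (operator norm) of a random matrix. -/
def mLp {m n : ℕ} (p : ℝ) (M : Ω → Matrix (Fin m) (Fin n) ℝ) : ℝ≥0∞ :=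
  eLpNorm (fun ω => opCLM (M ω)) (ENNReal.ofReal p) ℙ

/-- An ensemble (family of random elements indexed by `Fin N`) is exchangeable if its joint
distribution is invariant under every permutation of the members. -/
def Exchangeable {α : Type*} [MeasurableSpace α] {N : ℕ} (X : Fin N → Ω → α) : Prop :=
  ∀ σ : Equiv.Perm (Fin N),
    Measure.map (fun ω i => X (σ i) ω) (ℙ : Measure Ω)
      = Measure.map (fun ω i => X i ω) (ℙ : Measure Ω)

/-- Ensemble sample mean `X̄_N = (1/N) ∑ᵢ X_{Ni}`. -/
def sampleMean {n N : ℕ} (X : Fin N → Ω → Fin n → ℝ) (ω : Ω) : Fin n → ℝ :=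
  (N : ℝ)⁻¹ • ∑ i, X i ω

/-- Ensemble sample covariance `C(X_N) = (1/N) ∑ᵢ X_{Ni} X_{Ni}ᵀ − X̄_N X̄_Nᵀ`. -/
def sampleCov {n N : ℕ} (X : Fin N → Ω → Fin n → ℝ) (ω : Ω) : Matrix (Fin n) (Fin n) ℝ :=
  (N : ℝ)⁻¹ • ∑ i, vecMulVec (X i ω) (X i ω)
    - vecMulVec (sampleMean X ω) (sampleMean X ω)

/-- `μ` is the multivariate Gaussian distribution `N(u, Q)` on `ℝ^n`: every linear functional
`x ↦ ⟨l, x⟩` is a real Gaussian with mean `⟨l, u⟩` and variance `lᵀ Q l`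
(the Cramér–Wold characterization). -/
def IsGaussianVec {n : ℕ} (μ : Measure (Fin n → ℝ)) (u : Fin n → ℝ)
    (Q : Matrix (Fin n) (Fin n) ℝ) : Prop :=
  ∀ l : Fin n → ℝ,
    Measure.map (fun x => ∑ i, l i * x i) μ
      = gaussianReal (∑ i, l i * u i) (Real.toNNReal (l ⬝ᵥ Q.mulVec l))

/-- Covariance of two real random variables, `Cov(X, Y) = E(XY) − E(X)E(Y)`. -/
def cov (X Y : Ω → ℝ) : ℝ :=
  (∫ ω, X ω * Y ω) - (∫ ω, X ω) * (∫ ω, Y ω)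

/-- Covariance matrix `Cov(X, Y) = E(X Yᵀ) − E(X) E(Y)ᵀ` of two random vectors. -/
def covMat {n m : ℕ} (X : Ω → Fin n → ℝ) (Y : Ω → Fin m → ℝ) :
    Matrix (Fin n) (Fin m) ℝ :=
  fun i j => cov (fun ω => X ω i) (fun ω => Y ω j)

/-- If `X_N` and `D_N` are exchangeable ensembles, independent of each other,
and `F` is measurable and permutation invariant in its first (whole-ensemble) argument, then
the ensemble with members `Y_{Ni} = F(X_N, X_{Ni}, D_{Ni})` is exchangeable. -/
theorem exchangeable_of_permutation_invariant_map
    {m d n N : ℕ} (X : Fin N → Ω → Fin m → ℝ) (D : Fin N → Ω → Fin d → ℝ)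
    (hXmeas : ∀ i, Measurable (X i)) (hDmeas : ∀ i, Measurable (D i))
    (hXex : Exchangeable X) (hDex : Exchangeable D)
    (hXD : IndepFun (fun ω (i : Fin N) => X i ω) (fun ω (i : Fin N) => D i ω) ℙ)
    (F : (Fin N → Fin m → ℝ) → (Fin m → ℝ) → (Fin d → ℝ) → (Fin n → ℝ))
    (hFmeas : Measurable
      (fun q : (Fin N → Fin m → ℝ) × (Fin m → ℝ) × (Fin d → ℝ) => F q.1 q.2.1 q.2.2))
    (hFinv : ∀ (σ : Equiv.Perm (Fin N)) (E : Fin N → Fin m → ℝ) (x : Fin m → ℝ)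
      (z : Fin d → ℝ), F (fun i => E (σ i)) x z = F E x z) :
    Exchangeable (fun i ω => F (fun j => X j ω) (X i ω) (D i ω)) := by
  intro σ
  -- notation
  set XX : Ω → Fin N → Fin m → ℝ := fun ω i => X i ω with hXXdef
  set DD : Ω → Fin N → Fin d → ℝ := fun ω i => D i ω with hDDdef
  have hXXm : Measurable XX := measurable_pi_lambda _ fun i => hXmeas i
  have hDDm : Measurable DD := measurable_pi_lambda _ fun i => hDmeas i
  have hprmX : Measurable (fun f : Fin N → Fin m → ℝ => fun i => f (σ i)) :=
    measurable_pi_lambda _ fun i => measurable_pi_apply _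
  have hprmD : Measurable (fun f : Fin N → Fin d → ℝ => fun i => f (σ i)) :=
    measurable_pi_lambda _ fun i => measurable_pi_apply _
  -- permuted processes
  set Xσ : Ω → Fin N → Fin m → ℝ := fun ω i => X (σ i) ω with hXσdef
  set Dσ : Ω → Fin N → Fin d → ℝ := fun ω i => D (σ i) ω with hDσdef
  have hXσm : Measurable Xσ := hprmX.comp hXXm
  have hDσm : Measurable Dσ := hprmD.comp hDDm
  have hIndσ : IndepFun Xσ Dσ ℙ := hXD.comp hprmX hprmD
  -- joint laws
  have hjointσ : Measure.map (fun ω => (Xσ ω, Dσ ω)) (ℙ : Measure Ω)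
      = (Measure.map Xσ ℙ).prod (Measure.map Dσ ℙ) :=
    (indepFun_iff_map_prod_eq_prod_map_map hXσm.aemeasurable hDσm.aemeasurable).mp hIndσ
  have hjoint : Measure.map (fun ω => (XX ω, DD ω)) (ℙ : Measure Ω)
      = (Measure.map XX ℙ).prod (Measure.map DD ℙ) :=
    (indepFun_iff_map_prod_eq_prod_map_map hXXm.aemeasurable hDDm.aemeasurable).mp hXD
  have hkey : Measure.map (fun ω => (Xσ ω, Dσ ω)) (ℙ : Measure Ω)
      = Measure.map (fun ω => (XX ω, DD ω)) (ℙ : Measure Ω) := by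
    rw [hjointσ, hjoint, hXex σ, hDex σ]
  -- the map G
  set G : (Fin N → Fin m → ℝ) × (Fin N → Fin d → ℝ) → Fin N → Fin n → ℝ :=
    fun p i => F p.1 (p.1 i) (p.2 i) with hGdef
  have hGm : Measurable G := by
    refine measurable_pi_lambda _ fun i => ?_
    exact hFmeas.comp (measurable_fst.prodMk
      (((measurable_pi_apply i).comp measurable_fst).prodMk
        ((measurable_pi_apply i).comp measurable_snd)))
  have h1 : (fun ω i => F (fun j => X j ω) (X (σ i) ω) (D (σ i) ω))
      = G ∘ (fun ω => (Xσ ω, Dσ ω)) := by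
    funext ω
    simp only [Function.comp, hGdef, hXσdef, hDσdef]
    funext i
    exact (hFinv σ (fun j => X j ω) (X (σ i) ω) (D (σ i) ω)).symm
  have h2 : (fun ω i => F (fun j => X j ω) (X i ω) (D i ω))
      = G ∘ (fun ω => (XX ω, DD ω)) := rfl
  rw [h1, h2, ← Measure.map_map hGm (hXσm.prodMk hDσm),
    ← Measure.map_map hGm (hXXm.prodMk hDDm), hkey]
end
end

section
/- Suppose that for each N ≥ 1, X_N and U_N are ensembles of size N of real-valued random variables such that the stacked ensemble [X_N; U_N] (the 2×N random matrix with columns (X_{Ni}, U_{Ni})) is exchangeable, Cov(U_{Ni}, U_{Nj}) = 0 for all i ≠ j, the random variable U_{N1} is in L² and has the same distribution for all N, and ‖X_{N1} − U_{N1}‖₂ → 0 as N → ∞. Then the sample mean X̄_N converges to E(U_{N1}) in probability as N → ∞. -/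
open MeasureTheory ProbabilityTheory Matrix Filter
open scoped ENNReal NNReal

noncomputable section

variable {Ω : Type*} [MeasureSpace Ω] [IsProbabilityMeasure (ℙ : Measure Ω)]

/-- weak law of large numbers for exchangeable ensembles.
If for each `N` the stacked ensemble `[X_N; U_N]` (of size `N + 1`) is exchangeable,
the members of `U_N` are uncorrelated, `U_{N1} ∈ L²` with distribution independent of `N`,
and `‖X_{N1} − U_{N1}‖₂ → 0`, then the sample mean `X̄_N` converges in probability
to `E(U_{N1})`. -/
theorem sampleMean_tendstoInMeasure_of_exchangeable
    (X U : (N : ℕ) → Fin (N + 1) → Ω → ℝ)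
    (hXmeas : ∀ N i, Measurable (X N i)) (hUmeas : ∀ N i, Measurable (U N i))
    (hex : ∀ N, Exchangeable (fun i ω => (X N i ω, U N i ω)))
    (hUuncorr : ∀ N, ∀ i j : Fin (N + 1), i ≠ j → cov (U N i) (U N j) = 0)
    (hUL2 : ∀ N, MemLp (U N 0) 2 ℙ)
    (hUid : ∀ N M : ℕ,
      Measure.map (U N 0) (ℙ : Measure Ω) = Measure.map (U M 0) (ℙ : Measure Ω))
    (hXU : Tendsto (fun N => eLpNorm (fun ω => X N 0 ω - U N 0 ω) 2 ℙ) atTop (nhds 0)) :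
    TendstoInMeasure ℙ (fun (N : ℕ) ω => (((N + 1 : ℕ) : ℝ))⁻¹ * ∑ i, X N i ω) atTop
      (fun _ => ∫ ω, U 0 0 ω) := by
  classical
  set μ0 : ℝ := ∫ ω, U 0 0 ω with hμ0def
  set m2 : ℝ := ∫ ω, (U 0 0 ω) ^ 2 with hm2def
  -- measurability of the joint permuted maps
  have hjmeas : ∀ N (σ : Equiv.Perm (Fin (N + 1))),
      Measurable (fun ω (j : Fin (N + 1)) => (X N (σ j) ω, U N (σ j) ω)) := fun N σ =>
    measurable_pi_lambda _ fun j => (hXmeas N (σ j)).prodMk (hUmeas N (σ j))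
  have hpmeas : ∀ N (i : Fin (N + 1)),
      Measurable (fun ω => (X N i ω, U N i ω)) := fun N i =>
    (hXmeas N i).prodMk (hUmeas N i)
  -- the pair (X N i, U N i) has the same law as (X N 0, U N 0)
  have hlaw : ∀ N (i : Fin (N + 1)),
      Measure.map (fun ω => (X N i ω, U N i ω)) (ℙ : Measure Ω)
        = Measure.map (fun ω => (X N 0 ω, U N 0 ω)) (ℙ : Measure Ω) := by
    intro N i
    have hid : Measurable (fun ω (j : Fin (N + 1)) => (X N j ω, U N j ω)) :=
      measurable_pi_lambda _ fun j => (hXmeas N j).prodMk (hUmeas N j)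
    have h : Measure.map
          (fun ω (j : Fin (N + 1)) => (X N (Equiv.swap 0 i j) ω, U N (Equiv.swap 0 i j) ω))
          (ℙ : Measure Ω)
        = Measure.map (fun ω (j : Fin (N + 1)) => (X N j ω, U N j ω)) (ℙ : Measure Ω) :=
      hex N (Equiv.swap 0 i)
    have h0 := congrArg (Measure.map (fun f : Fin (N + 1) → ℝ × ℝ => f 0)) h
    rw [Measure.map_map (measurable_pi_apply 0) (hjmeas N (Equiv.swap 0 i)),
        Measure.map_map (measurable_pi_apply 0) hid] at h0
    simpa [Function.comp_def, Equiv.swap_apply_left] using h0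
  -- each U N i has the same law as U 0 0
  have hlawU : ∀ N (i : Fin (N + 1)),
      Measure.map (U N i) (ℙ : Measure Ω) = Measure.map (U 0 0) (ℙ : Measure Ω) := by
    intro N i
    have h0 := congrArg (Measure.map (Prod.snd : ℝ × ℝ → ℝ)) (hlaw N i)
    rw [Measure.map_map measurable_snd (hpmeas N i),
        Measure.map_map measurable_snd (hpmeas N 0)] at h0
    have : Measure.map (U N 0) (ℙ : Measure Ω) = Measure.map (U 0 0) (ℙ : Measure Ω) :=
      hUid N 0
    simpa [Function.comp_def] using h0.trans this
  -- each U N i is in L²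
  have hU2 : ∀ N (i : Fin (N + 1)), MemLp (U N i) 2 (ℙ : Measure Ω) := by
    intro N i
    have h1 : MemLp (id : ℝ → ℝ) 2 (Measure.map (U N i) (ℙ : Measure Ω)) := by
      rw [hlawU N i]
      exact (memLp_map_measure_iff aestronglyMeasurable_id
        (hUmeas 0 0).aemeasurable).2 (hUL2 0)
    exact (memLp_map_measure_iff aestronglyMeasurable_id (hUmeas N i).aemeasurable).1 h1
  -- means and second moments
  have hintU : ∀ N (i : Fin (N + 1)), ∫ ω, U N i ω = μ0 := by
    intro N i
    have h1 : ∫ ω, U N i ω = ∫ x, x ∂(Measure.map (U N i) (ℙ : Measure Ω)) :=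
      (integral_map (hUmeas N i).aemeasurable aestronglyMeasurable_id).symm
    have h2 : ∫ x, x ∂(Measure.map (U 0 0) (ℙ : Measure Ω)) = ∫ ω, U 0 0 ω :=
      integral_map (hUmeas 0 0).aemeasurable aestronglyMeasurable_id
    rw [h1, hlawU N i, h2]
  have hint2U : ∀ N (i : Fin (N + 1)), ∫ ω, (U N i ω) ^ 2 = m2 := by
    intro N i
    have hsq : AEStronglyMeasurable (fun x : ℝ => x ^ 2)
        (Measure.map (U N i) (ℙ : Measure Ω)) :=
      (measurable_id.pow_const 2).aestronglyMeasurable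
    have h1 : ∫ ω, (U N i ω) ^ 2 = ∫ x, x ^ 2 ∂(Measure.map (U N i) (ℙ : Measure Ω)) :=
      (integral_map (hUmeas N i).aemeasurable hsq).symm
    have h2 : ∫ x, x ^ 2 ∂(Measure.map (U 0 0) (ℙ : Measure Ω)) = ∫ ω, (U 0 0 ω) ^ 2 :=
      integral_map (hUmeas 0 0).aemeasurable
        ((measurable_id.pow_const 2).aestronglyMeasurable)
    rw [h1, hlawU N i, h2]
  -- products of centered variables are integrable
  have hmul : ∀ N (i j : Fin (N + 1)) (f g : Ω → ℝ), MemLp f 2 (ℙ : Measure Ω) →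
      MemLp g 2 (ℙ : Measure Ω) → Integrable (fun ω => f ω * g ω) (ℙ : Measure Ω) := by
    intro N i j f g hf hg
    have h : MemLp (f • g) 1 (ℙ : Measure Ω) :=
      MemLp.smul (r := 1) hg hf
    exact memLp_one_iff_integrable.1 h
  have hV2 : ∀ N (i : Fin (N + 1)), MemLp (fun ω => U N i ω - μ0) 2 (ℙ : Measure Ω) :=
    fun N i => (hU2 N i).sub (memLp_const μ0)
  have hVint : ∀ N (i j : Fin (N + 1)),
      Integrable (fun ω => (U N i ω - μ0) * (U N j ω - μ0)) (ℙ : Measure Ω) :=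
    fun N i j => hmul N i j _ _ (hV2 N i) (hV2 N j)
  -- covariance computation
  have hVij : ∀ N (i j : Fin (N + 1)),
      ∫ ω, (U N i ω - μ0) * (U N j ω - μ0)
        = if i = j then m2 - μ0 ^ 2 else 0 := by
    intro N i j
    have hUU : Integrable (fun ω => U N i ω * U N j ω) (ℙ : Measure Ω) :=
      hmul N i j _ _ (hU2 N i) (hU2 N j)
    have hUi : Integrable (U N i) (ℙ : Measure Ω) := (hU2 N i).integrable one_le_two
    have hUj : Integrable (U N j) (ℙ : Measure Ω) := (hU2 N j).integrable one_le_two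
    have hexp : (fun ω => (U N i ω - μ0) * (U N j ω - μ0))
        = fun ω => U N i ω * U N j ω - μ0 * U N i ω - μ0 * U N j ω + μ0 * μ0 := by
      funext ω; ring
    have hI1 : Integrable (fun ω => U N i ω * U N j ω - μ0 * U N i ω) (ℙ : Measure Ω) :=
      hUU.sub (hUi.const_mul μ0)
    have hI2 : Integrable
        (fun ω => U N i ω * U N j ω - μ0 * U N i ω - μ0 * U N j ω) (ℙ : Measure Ω) :=
      hI1.sub (hUj.const_mul μ0)
    rw [hexp, integral_add hI2 (integrable_const _),
      integral_sub hI1 (hUj.const_mul μ0),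
      integral_sub hUU (hUi.const_mul μ0),
      integral_const_mul, integral_const_mul, integral_const, hintU N i, hintU N j]
    by_cases hij : i = j
    · subst hij
      have : ∫ ω, U N i ω * U N i ω = m2 := by
        rw [← hint2U N i]; congr 1; funext ω; ring
      rw [this]
      simp [measure_univ]
      ring
    · have hc := hUuncorr N i j hij
      unfold cov at hc
      rw [hintU N i, hintU N j] at hc
      have : ∫ ω, U N i ω * U N j ω = μ0 * μ0 := by linarith
      rw [this]
      simp [measure_univ, hij]
  -- second moment of the centered sum
  have hSint : ∀ N, ∫ ω, (∑ i : Fin (N + 1), (U N i ω - μ0)) ^ 2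
      = (N + 1 : ℝ) * (m2 - μ0 ^ 2) := by
    intro N
    have hexp : ∀ ω : Ω, (∑ i : Fin (N + 1), (U N i ω - μ0)) ^ 2
        = ∑ i : Fin (N + 1), ∑ j : Fin (N + 1), (U N i ω - μ0) * (U N j ω - μ0) := by
      intro ω
      rw [sq, Finset.sum_mul_sum]
    calc ∫ ω, (∑ i : Fin (N + 1), (U N i ω - μ0)) ^ 2
        = ∫ ω, ∑ i : Fin (N + 1), ∑ j : Fin (N + 1),
            (U N i ω - μ0) * (U N j ω - μ0) := by
          exact integral_congr_ae (Filter.Eventually.of_forall hexp)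
      _ = ∑ i : Fin (N + 1), ∑ j : Fin (N + 1),
            ∫ ω, (U N i ω - μ0) * (U N j ω - μ0) := by
          rw [integral_finset_sum _ fun i _ => integrable_finset_sum _ fun j _ => hVint N i j]
          exact Finset.sum_congr rfl fun i _ =>
            integral_finset_sum _ fun j _ => hVint N i j
      _ = ∑ i : Fin (N + 1), (m2 - μ0 ^ 2) := by
          refine Finset.sum_congr rfl fun i _ => ?_
          rw [Finset.sum_congr rfl fun j _ => hVij N i j]
          simp
      _ = (N + 1 : ℝ) * (m2 - μ0 ^ 2) := by
          rw [Finset.sum_const, Finset.card_univ, Fintype.card_fin, nsmul_eq_mul]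
          push_cast; ring
  have hσ2 : 0 ≤ m2 - μ0 ^ 2 := by
    have h := hVij 0 0 0
    norm_num at h
    rw [← h]
    exact integral_nonneg fun ω => mul_self_nonneg _
  -- the L² norm of the centered mean of U
  have hBmem : ∀ N : ℕ, MemLp (fun ω => (((N + 1 : ℕ) : ℝ))⁻¹
      * ∑ i : Fin (N + 1), (U N i ω - μ0)) 2 (ℙ : Measure Ω) := by
    intro N
    exact (memLp_finset_sum _ fun i _ => hV2 N i).const_mul _
  have hBval : ∀ N : ℕ, eLpNorm (fun ω => (((N + 1 : ℕ) : ℝ))⁻¹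
      * ∑ i : Fin (N + 1), (U N i ω - μ0)) 2 (ℙ : Measure Ω)
      = ENNReal.ofReal (Real.sqrt ((m2 - μ0 ^ 2) / ((N : ℝ) + 1))) := by
    intro N
    have hn : ((N + 1 : ℕ) : ℝ) ≠ 0 := by positivity
    rw [(hBmem N).eLpNorm_eq_integral_rpow_norm two_ne_zero ENNReal.ofNat_ne_top]
    have htr : (2 : ℝ≥0∞).toReal = 2 := by simp
    have hnorm : ∀ x : ℝ, ‖x‖ ^ (2 : ℝ) = x ^ 2 := by
      intro x
      rw [show (2 : ℝ) = ((2 : ℕ) : ℝ) by norm_num, Real.rpow_natCast,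
        Real.norm_eq_abs, sq_abs]
    have hint : ∫ ω, ‖(((N + 1 : ℕ) : ℝ))⁻¹ * ∑ i : Fin (N + 1), (U N i ω - μ0)‖
        ^ (2 : ℝ≥0∞).toReal = (m2 - μ0 ^ 2) / ((N : ℝ) + 1) := by
      rw [htr]
      have h1 : ∀ ω : Ω, ‖(((N + 1 : ℕ) : ℝ))⁻¹ * ∑ i : Fin (N + 1), (U N i ω - μ0)‖
          ^ (2 : ℝ) = (((N + 1 : ℕ) : ℝ))⁻¹ ^ 2
            * (∑ i : Fin (N + 1), (U N i ω - μ0)) ^ 2 := by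
        intro ω; rw [hnorm]; ring
      rw [integral_congr_ae (Filter.Eventually.of_forall h1), integral_const_mul, hSint N]
      field_simp
      push_cast
      ring
    rw [hint, htr, show ((2 : ℝ))⁻¹ = 1 / (2 : ℝ) by norm_num, ← Real.sqrt_eq_rpow]
  -- the L² norm of the mean of X - U
  have hXUi : ∀ N (i : Fin (N + 1)),
      eLpNorm (fun ω => X N i ω - U N i ω) 2 (ℙ : Measure Ω)
        = eLpNorm (fun ω => X N 0 ω - U N 0 ω) 2 (ℙ : Measure Ω) := by
    intro N i
    have hg : Measurable (fun p : ℝ × ℝ => p.1 - p.2) := measurable_fst.sub measurable_snd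
    calc eLpNorm (fun ω => X N i ω - U N i ω) 2 (ℙ : Measure Ω)
        = eLpNorm (fun p : ℝ × ℝ => p.1 - p.2) 2
            (Measure.map (fun ω => (X N i ω, U N i ω)) (ℙ : Measure Ω)) :=
          (eLpNorm_map_measure hg.aestronglyMeasurable (hpmeas N i).aemeasurable).symm
      _ = eLpNorm (fun p : ℝ × ℝ => p.1 - p.2) 2
            (Measure.map (fun ω => (X N 0 ω, U N 0 ω)) (ℙ : Measure Ω)) := by
          rw [hlaw N i]
      _ = eLpNorm (fun ω => X N 0 ω - U N 0 ω) 2 (ℙ : Measure Ω) :=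
          eLpNorm_map_measure hg.aestronglyMeasurable (hpmeas N 0).aemeasurable
  have hcoef : ∀ N : ℕ, (‖(((N + 1 : ℕ) : ℝ))⁻¹‖₊ : ℝ≥0∞) * ((N + 1 : ℕ) : ℝ≥0∞) = 1 := by
    intro N
    have h1 : (‖(((N + 1 : ℕ) : ℝ))⁻¹‖₊ : ℝ≥0∞) = (((N + 1 : ℕ) : ℝ≥0∞))⁻¹ := by
      rw [nnnorm_inv, ENNReal.coe_inv (by simp [Nat.cast_add_one_ne_zero]), Real.nnnorm_natCast]
      simp
    rw [h1]
    exact ENNReal.inv_mul_cancel (by simp) (by simp)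
  have hA : ∀ N : ℕ, eLpNorm (fun ω => (((N + 1 : ℕ) : ℝ))⁻¹
      * ∑ i : Fin (N + 1), (X N i ω - U N i ω)) 2 (ℙ : Measure Ω)
      ≤ eLpNorm (fun ω => X N 0 ω - U N 0 ω) 2 (ℙ : Measure Ω) := by
    intro N
    have h1 : (fun ω => (((N + 1 : ℕ) : ℝ))⁻¹ * ∑ i : Fin (N + 1), (X N i ω - U N i ω))
        = (((N + 1 : ℕ) : ℝ))⁻¹ • (fun ω => ∑ i : Fin (N + 1), (X N i ω - U N i ω)) := rfl
    have h2 : (fun ω : Ω => ∑ i : Fin (N + 1), (X N i ω - U N i ω))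
        = ∑ i : Fin (N + 1), (fun ω => X N i ω - U N i ω) := by
      funext ω; simp
    rw [h1, eLpNorm_const_smul, h2]
    have h3 : eLpNorm (∑ i : Fin (N + 1), (fun ω => X N i ω - U N i ω)) 2 (ℙ : Measure Ω)
        ≤ ∑ i : Fin (N + 1),
            eLpNorm (fun ω => X N i ω - U N i ω) 2 (ℙ : Measure Ω) :=
      eLpNorm_sum_le (fun i _ =>
        ((hXmeas N i).sub (hUmeas N i)).aestronglyMeasurable) one_le_two
    have h4 : ∑ i : Fin (N + 1),
        eLpNorm (fun ω => X N i ω - U N i ω) 2 (ℙ : Measure Ω)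
        = ((N + 1 : ℕ) : ℝ≥0∞)
            * eLpNorm (fun ω => X N 0 ω - U N 0 ω) 2 (ℙ : Measure Ω) := by
      rw [Finset.sum_congr rfl fun i _ => hXUi N i, Finset.sum_const, Finset.card_univ,
        Fintype.card_fin, nsmul_eq_mul]
    calc (‖(((N + 1 : ℕ) : ℝ))⁻¹‖₊ : ℝ≥0∞)
          * eLpNorm (∑ i : Fin (N + 1), (fun ω => X N i ω - U N i ω)) 2 (ℙ : Measure Ω)
        ≤ (‖(((N + 1 : ℕ) : ℝ))⁻¹‖₊ : ℝ≥0∞) * (((N + 1 : ℕ) : ℝ≥0∞)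
            * eLpNorm (fun ω => X N 0 ω - U N 0 ω) 2 (ℙ : Measure Ω)) := by
          rw [← h4]; exact mul_le_mul_right h3 _
      _ = eLpNorm (fun ω => X N 0 ω - U N 0 ω) 2 (ℙ : Measure Ω) := by
          rw [← mul_assoc, hcoef N, one_mul]
  -- pointwise decomposition and the key bound
  have key : ∀ N : ℕ,
      eLpNorm ((fun ω => (((N + 1 : ℕ) : ℝ))⁻¹ * ∑ i : Fin (N + 1), X N i ω)
        - fun _ => μ0) 2 (ℙ : Measure Ω)
      ≤ eLpNorm (fun ω => X N 0 ω - U N 0 ω) 2 (ℙ : Measure Ω)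
        + ENNReal.ofReal (Real.sqrt ((m2 - μ0 ^ 2) / ((N : ℝ) + 1))) := by
    intro N
    have hn : ((N + 1 : ℕ) : ℝ) ≠ 0 := by positivity
    have hdec : ((fun ω => (((N + 1 : ℕ) : ℝ))⁻¹ * ∑ i : Fin (N + 1), X N i ω)
        - fun _ => μ0)
        = (fun ω => (((N + 1 : ℕ) : ℝ))⁻¹ * ∑ i : Fin (N + 1), (X N i ω - U N i ω))
          + (fun ω => (((N + 1 : ℕ) : ℝ))⁻¹ * ∑ i : Fin (N + 1), (U N i ω - μ0)) := by
      funext ω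
      simp only [Pi.sub_apply, Pi.add_apply]
      rw [Finset.sum_sub_distrib, Finset.sum_sub_distrib, Finset.sum_const,
        Finset.card_univ, Fintype.card_fin, nsmul_eq_mul]
      field_simp
      ring
    rw [hdec]
    refine (eLpNorm_add_le ?_ ?_ one_le_two).trans (add_le_add (hA N) (le_of_eq (hBval N)))
    · exact ((Finset.measurable_sum Finset.univ fun i _ =>
        (hXmeas N i).sub (hUmeas N i)).const_mul _).aestronglyMeasurable
    · exact ((Finset.measurable_sum Finset.univ fun i _ =>
        (hUmeas N i).sub measurable_const).const_mul _).aestronglyMeasurable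
  -- convergence of the bound
  have hbb : Tendsto (fun N : ℕ =>
      ENNReal.ofReal (Real.sqrt ((m2 - μ0 ^ 2) / ((N : ℝ) + 1)))) atTop (nhds 0) := by
    have h1 : Tendsto (fun N : ℕ => (m2 - μ0 ^ 2) / ((N : ℝ) + 1)) atTop (nhds 0) :=
      Tendsto.div_atTop tendsto_const_nhds
        (tendsto_atTop_add_const_right _ _ tendsto_natCast_atTop_atTop)
    have h2 : Tendsto (fun N : ℕ => Real.sqrt ((m2 - μ0 ^ 2) / ((N : ℝ) + 1)))
        atTop (nhds 0) := by
      have := (Real.continuous_sqrt.tendsto 0).comp h1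
      simpa [Function.comp_def] using this
    have := (ENNReal.continuous_ofReal.tendsto 0).comp h2
    simpa [Function.comp_def] using this
  have hupper : Tendsto (fun N : ℕ =>
      eLpNorm (fun ω => X N 0 ω - U N 0 ω) 2 (ℙ : Measure Ω)
        + ENNReal.ofReal (Real.sqrt ((m2 - μ0 ^ 2) / ((N : ℝ) + 1)))) atTop (nhds 0) := by
    have := hXU.add hbb
    simpa using this
  have hmain : Tendsto (fun N : ℕ =>
      eLpNorm ((fun ω => (((N + 1 : ℕ) : ℝ))⁻¹ * ∑ i : Fin (N + 1), X N i ω)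
        - fun _ => μ0) 2 (ℙ : Measure Ω)) atTop (nhds 0) :=
    tendsto_of_tendsto_of_tendsto_of_le_of_le tendsto_const_nhds hupper
      (fun N => zero_le) key
  exact tendstoInMeasure_of_tendsto_eLpNorm (p := 2) two_ne_zero
    (fun N => ((Finset.measurable_sum Finset.univ fun i _ =>
      hXmeas N i).const_mul _).aestronglyMeasurable)
    aestronglyMeasurable_const hmain
end
end

section
/- Suppose that for each N ≥ 1, X_N and U_N are ensembles of size N of ℝ^n-valued random vectors such that the stacked ensemble [X_N; U_N] is exchangeable, the members of U_N are i.i.d., the random vector U_{N1} is in L⁴ and has the same distribution for all N, and ‖X_{N1} − U_{N1}‖₄ → 0 as N → ∞. Then, as N → ∞, the sample mean X̄_N converges in probability to E(U_{N1}) and the sample covariance C(X_N) converges in probability to Cov(U_{N1}). -/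
open MeasureTheory ProbabilityTheory Matrix Filter
open scoped ENNReal NNReal

noncomputable section

variable {Ω : Type*} [MeasureSpace Ω] [IsProbabilityMeasure (ℙ : Measure Ω)]

set_option linter.unusedSectionVars false

section AuxDet

lemma abs_apply_le_norm_toEuc {n : ℕ} (v : Fin n → ℝ) (j : Fin n) : |v j| ≤ ‖toEuc v‖ := by
  rw [toEuc, EuclideanSpace.norm_eq]
  calc (|v j|) = Real.sqrt (‖v j‖^2) := by rw [Real.sqrt_sq_eq_abs]; simp
  _ ≤ _ := by
      apply Real.sqrt_le_sqrt
      exact Finset.single_le_sum (f := fun i => ‖v i‖^2) (fun i _ => sq_nonneg _) (Finset.mem_univ j)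

lemma norm_toEuc_le_sum {n : ℕ} (v : Fin n → ℝ) : ‖toEuc v‖ ≤ ∑ j, |v j| := by
  rw [toEuc, EuclideanSpace.norm_eq]
  have h1 : ∑ i, ‖v i‖^2 ≤ (∑ j, |v j|)^2 := by
    have : ∀ i ∈ Finset.univ, ‖v i‖^2 ≤ |v i| * (∑ j, |v j|) := by
      intro i _
      rw [sq, Real.norm_eq_abs]
      exact mul_le_mul_of_nonneg_left (Finset.single_le_sum (f := fun j => |v j|)
        (fun j _ => abs_nonneg _) (Finset.mem_univ i)) (abs_nonneg _)
    calc ∑ i, ‖v i‖^2 ≤ ∑ i, |v i| * (∑ j, |v j|) := Finset.sum_le_sum this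
    _ = (∑ j, |v j|)^2 := by rw [← Finset.sum_mul, sq]
  calc Real.sqrt (∑ i, ‖v i‖^2) ≤ Real.sqrt ((∑ j, |v j|)^2) := Real.sqrt_le_sqrt h1
  _ = |(∑ j, |v j|)| := Real.sqrt_sq_eq_abs _
  _ = ∑ j, |v j| := abs_of_nonneg (Finset.sum_nonneg fun j _ => abs_nonneg _)

lemma norm_pi_le_sum {n : ℕ} (v : Fin n → ℝ) : ‖v‖ ≤ ∑ j, |v j| := by
  refine (pi_norm_le_iff_of_nonneg (Finset.sum_nonneg fun j _ => abs_nonneg _)).2 fun i => ?_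
  rw [Real.norm_eq_abs]
  exact Finset.single_le_sum (f := fun j => |v j|) (fun j _ => abs_nonneg _) (Finset.mem_univ i)

lemma norm_pi_le_norm_toEuc {n : ℕ} (v : Fin n → ℝ) : ‖v‖ ≤ ‖toEuc v‖ := by
  refine (pi_norm_le_iff_of_nonneg (norm_nonneg _)).2 fun i => ?_
  rw [Real.norm_eq_abs]
  exact abs_apply_le_norm_toEuc v i

lemma opCLM_norm_le {m n : ℕ} (M : Matrix (Fin m) (Fin n) ℝ) :
    ‖opCLM M‖ ≤ ∑ i, ∑ j, |M i j| := by
  apply ContinuousLinearMap.opNorm_le_bound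
  · exact Finset.sum_nonneg fun i _ => Finset.sum_nonneg fun j _ => abs_nonneg _
  intro x
  have hx : opCLM M x = toEuc (M.mulVec (WithLp.equiv 2 (Fin n → ℝ) x)) := rfl
  rw [hx]
  set y := WithLp.equiv 2 (Fin n → ℝ) x with hy
  calc ‖toEuc (M.mulVec y)‖ ≤ ∑ i, |(M.mulVec y) i| := norm_toEuc_le_sum _
  _ ≤ ∑ i, ∑ j, |M i j| * ‖x‖ := by
      apply Finset.sum_le_sum; intro i _
      calc (|(M.mulVec y) i|) = |∑ j, M i j * y j| := rfl
      _ ≤ ∑ j, |M i j * y j| := Finset.abs_sum_le_sum_abs _ _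
      _ ≤ ∑ j, |M i j| * ‖x‖ := by
          apply Finset.sum_le_sum; intro j _
          rw [abs_mul]
          apply mul_le_mul_of_nonneg_left _ (abs_nonneg _)
          have : |y j| ≤ ‖toEuc y‖ := abs_apply_le_norm_toEuc y j
          simpa [toEuc, hy] using this
  _ = (∑ i, ∑ j, |M i j|) * ‖x‖ := by rw [Finset.sum_mul]; congr 1; ext i; rw [Finset.sum_mul]

lemma opCLM_sub {m n : ℕ} (A B : Matrix (Fin m) (Fin n) ℝ) :
    opCLM (A - B) = opCLM A - opCLM B := by
  unfold opCLM
  rw [map_sub, map_sub]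

lemma continuous_opCLM {m n : ℕ} :
    Continuous fun M : Matrix (Fin m) (Fin n) ℝ => opCLM M := by
  have : (fun M : Matrix (Fin m) (Fin n) ℝ => opCLM M)
      = (Matrix.toEuclideanLin.trans LinearMap.toContinuousLinearMap : Matrix (Fin m) (Fin n) ℝ ≃ₗ[ℝ] _) := rfl
  rw [this]
  exact LinearMap.continuous_of_finiteDimensional _

end AuxDet

section AuxProb

lemma eLpNorm_eq_of_map_eq {β : Type*} [MeasurableSpace β] {f g : Ω → β}
    {E : Type*} [NormedAddCommGroup E]
    (hf : Measurable f) (hg : Measurable g) (h : Measure.map f ℙ = Measure.map g ℙ)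
    {φ : β → E} (hφ : StronglyMeasurable φ) (p : ℝ≥0∞) :
    eLpNorm (fun ω => φ (f ω)) p ℙ = eLpNorm (fun ω => φ (g ω)) p ℙ :=
  calc eLpNorm (fun ω => φ (f ω)) p ℙ = eLpNorm φ p (Measure.map f ℙ) :=
        (eLpNorm_map_measure hφ.aestronglyMeasurable hf.aemeasurable).symm
  _ = eLpNorm φ p (Measure.map g ℙ) := by rw [h]
  _ = _ := eLpNorm_map_measure hφ.aestronglyMeasurable hg.aemeasurable

lemma integral_eq_of_map_eq {β : Type*} [MeasurableSpace β] {f g : Ω → β}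
    (hf : Measurable f) (hg : Measurable g) (h : Measure.map f ℙ = Measure.map g ℙ)
    {φ : β → ℝ} (hφ : StronglyMeasurable φ) :
    ∫ ω, φ (f ω) = ∫ ω, φ (g ω) := by
  rw [← integral_map hf.aemeasurable hφ.aestronglyMeasurable, h,
    integral_map hg.aemeasurable hφ.aestronglyMeasurable]

lemma memℒp_of_map_eq {β : Type*} [MeasurableSpace β] {f g : Ω → β}
    (hf : Measurable f) (hg : Measurable g) (h : Measure.map f ℙ = Measure.map g ℙ)
    {E : Type*} [NormedAddCommGroup E] {φ : β → E} (hφ : StronglyMeasurable φ) {p : ℝ≥0∞}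
    (hm : MemLp (fun ω => φ (g ω)) p ℙ) : MemLp (fun ω => φ (f ω)) p ℙ := by
  refine ⟨(hφ.comp_measurable hf).aestronglyMeasurable, ?_⟩
  rw [eLpNorm_eq_of_map_eq hf hg h hφ p]
  exact hm.2

lemma variance_eq_of_map_eq {β : Type*} [MeasurableSpace β] {f g : Ω → β}
    (hf : Measurable f) (hg : Measurable g) (h : Measure.map f ℙ = Measure.map g ℙ)
    {φ : β → ℝ} (hφ : Measurable φ) :
    variance (fun ω => φ (f ω)) ℙ = variance (fun ω => φ (g ω)) ℙ := by
  have hc : (∫ ω, φ (f ω)) = ∫ ω, φ (g ω) :=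
    integral_eq_of_map_eq hf hg h hφ.stronglyMeasurable
  unfold ProbabilityTheory.variance ProbabilityTheory.evariance
  rw [hc]
  congr 1
  have hmeas : Measurable fun b => (‖φ b - ∫ ω, φ (g ω)‖ₑ ^ 2) := by
    measurability
  rw [← lintegral_map hmeas hf, h, lintegral_map hmeas hg]

/-- Weak LLN bound: `L²` distance of the average of iid `L²` variables from their mean. -/
lemma eLpNorm_mean_sub_le {N : ℕ} (Y : Fin (N + 1) → Ω → ℝ)
    (hmeas : ∀ i, Measurable (Y i))
    (hind : iIndepFun Y ℙ)
    (hL2 : ∀ i, MemLp (Y i) 2 ℙ) (c v : ℝ)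
    (hc : ∀ i, ∫ ω, Y i ω = c) (hv : ∀ i, variance (Y i) ℙ = v) :
    eLpNorm (fun ω => ((N : ℝ) + 1)⁻¹ * (∑ i, Y i ω) - c) 2 ℙ
      ≤ ENNReal.ofReal (Real.sqrt (v / ((N : ℝ) + 1))) := by
  have hv0 : 0 ≤ v := by rw [← hv 0]; exact variance_nonneg _ _
  set S : Ω → ℝ := ∑ i, Y i with hS
  have hSapp : ∀ ω, S ω = ∑ i, Y i ω := fun ω => by rw [hS]; simp
  have hSmem : MemLp S 2 ℙ := memLp_finset_sum' _ (fun i _ => hL2 i)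
  have hSint : ∫ ω, S ω = ((N : ℝ) + 1) * c := by
    simp_rw [hSapp]
    rw [integral_finset_sum _ (fun i _ => (hL2 i).integrable one_le_two)]
    simp [hc, Finset.card_univ, mul_comm]
  have hSvar : variance S ℙ = ((N : ℝ) + 1) * v := by
    rw [hS, IndepFun.variance_sum (fun i _ => hL2 i)
      (fun i _ j _ hij => hind.indepFun hij)]
    simp [hv, Finset.card_univ, mul_comm]
  have key : (fun ω => ((N : ℝ) + 1)⁻¹ * (∑ i, Y i ω) - c)
      = ((N : ℝ) + 1)⁻¹ • (fun ω => S ω - ∫ ω', S ω') := by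
    funext ω
    rw [Pi.smul_apply, hSint, hSapp, smul_eq_mul, mul_sub]
    congr 1
    rw [← mul_assoc, inv_mul_cancel₀ (by positivity : ((N:ℝ)+1) ≠ 0), one_mul]
  rw [key, eLpNorm_const_smul]
  have hev : eLpNorm (fun ω => S ω - ∫ ω', S ω') 2 ℙ = evariance S ℙ ^ (1/2 : ℝ) := by
    rw [eLpNorm_eq_lintegral_rpow_enorm_toReal two_ne_zero ENNReal.ofNat_ne_top,
      ProbabilityTheory.evariance]
    simp_rw [ENNReal.toReal_ofNat, ← ENNReal.rpow_natCast, Nat.cast_ofNat]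
  rw [hev]
  have hvar : evariance S ℙ = ENNReal.ofReal (((N : ℝ) + 1) * v) := by
    rw [← hSmem.ofReal_variance_eq, hSvar]
  rw [hvar, ENNReal.ofReal_rpow_of_nonneg (by positivity) (by norm_num : (0:ℝ) ≤ 1/2),
    Real.enorm_eq_ofReal (by positivity : (0:ℝ) ≤ ((N : ℝ) + 1)⁻¹),
    ← ENNReal.ofReal_mul (by positivity)]
  apply ENNReal.ofReal_le_ofReal
  rw [← Real.sqrt_eq_rpow, Real.sqrt_div hv0, Real.sqrt_mul (by positivity)]
  have hs : Real.sqrt ((N:ℝ)+1) * Real.sqrt ((N:ℝ)+1) = (N:ℝ)+1 :=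
    Real.mul_self_sqrt (by positivity)
  have h0 : Real.sqrt ((N:ℝ)+1) ≠ 0 := by positivity
  apply le_of_eq
  rw [eq_div_iff h0]
  calc ((N:ℝ)+1)⁻¹ * (Real.sqrt ((N:ℝ)+1) * Real.sqrt v) * Real.sqrt ((N:ℝ)+1)
      = ((N:ℝ)+1)⁻¹ * (Real.sqrt ((N:ℝ)+1) * Real.sqrt ((N:ℝ)+1)) * Real.sqrt v := by ring
  _ = Real.sqrt v := by rw [hs, inv_mul_cancel₀ (by positivity), one_mul]

lemma ennnorm_inv_succ_mul_succ (N : ℕ) :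
    (‖(((N:ℝ))+1)⁻¹‖₊ : ℝ≥0∞) * ((N+1 : ℕ) : ℝ≥0∞) = 1 := by
  rw [← enorm_eq_nnnorm, Real.enorm_eq_ofReal (by positivity),
    ENNReal.ofReal_inv_of_pos (by positivity)]
  have h1 : ENNReal.ofReal ((N:ℝ)+1) = ((N+1 : ℕ) : ℝ≥0∞) := by
    rw [show ((N:ℝ)+1) = ((N+1 : ℕ) : ℝ) by push_cast; ring, ENNReal.ofReal_natCast]
  rw [h1]
  exact ENNReal.inv_mul_cancel (by exact_mod_cast Nat.succ_ne_zero N)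
    (ENNReal.natCast_ne_top _)

lemma eLpNorm_avg_le {N : ℕ} {p : ℝ≥0∞} (hp : 1 ≤ p) (f : Fin (N+1) → Ω → ℝ)
    (hmeas : ∀ i, AEStronglyMeasurable (f i) ℙ) {B : ℝ≥0∞}
    (hB : ∀ i, eLpNorm (f i) p ℙ ≤ B) :
    eLpNorm (fun ω => ((N:ℝ)+1)⁻¹ * ∑ i, f i ω) p ℙ ≤ B := by
  have h1 : (fun ω => ((N:ℝ)+1)⁻¹ * ∑ i, f i ω) = ((N:ℝ)+1)⁻¹ • (∑ i, f i) := by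
    funext ω; simp [Finset.sum_apply]
  rw [h1, eLpNorm_const_smul]
  calc (‖((N:ℝ)+1)⁻¹‖₊ : ℝ≥0∞) * eLpNorm (∑ i, f i) p ℙ
      ≤ (‖((N:ℝ)+1)⁻¹‖₊ : ℝ≥0∞) * ∑ _i : Fin (N+1), B := by
        gcongr
        exact (eLpNorm_sum_le (fun i _ => hmeas i) hp).trans
          (Finset.sum_le_sum fun i _ => hB i)
  _ = (‖((N:ℝ)+1)⁻¹‖₊ : ℝ≥0∞) * (((N+1 : ℕ) : ℝ≥0∞) * B) := by
        rw [Finset.sum_const, Finset.card_univ, Fintype.card_fin, nsmul_eq_mul]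
  _ = B := by rw [← mul_assoc, ennnorm_inv_succ_mul_succ, one_mul]

lemma eLpNorm_mul_le_two_two {a b : Ω → ℝ}
    (ha : AEStronglyMeasurable a ℙ) (hb : AEStronglyMeasurable b ℙ) :
    eLpNorm (fun ω => a ω * b ω) 1 ℙ ≤ eLpNorm a 2 ℙ * eLpNorm b 2 ℙ := by
  have h := eLpNorm_smul_le_mul_eLpNorm (f := b) (φ := a) hb ha
    (p := 2) (q := 2) (r := 1)
  exact h

lemma tendsto_ofReal_sqrt_div_succ (v : ℝ) :
    Tendsto (fun N : ℕ => ENNReal.ofReal (Real.sqrt (v / ((N:ℝ)+1)))) atTop (nhds 0) := by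
  have h1 : Tendsto (fun N : ℕ => v / ((N:ℝ)+1)) atTop (nhds 0) := by
    have h0 := (tendsto_const_div_atTop_nhds_zero_nat v).comp (tendsto_add_atTop_nat 1)
    have heq : ((fun n : ℕ => v / (n:ℝ)) ∘ fun a => a + 1) = fun N : ℕ => v / ((N:ℝ)+1) := by
      funext N; simp [Function.comp, Nat.cast_add_one]
    rwa [heq] at h0
  have h2 : Tendsto (fun N : ℕ => Real.sqrt (v / ((N:ℝ)+1))) atTop (nhds 0) := by
    have := (Real.continuous_sqrt.tendsto 0).comp h1
    simpa [Function.comp_def] using this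
  have h3 := (ENNReal.continuous_ofReal.tendsto 0).comp h2
  simpa [Function.comp_def] using h3

lemma ennreal_tendsto_mul_zero {f h : ℕ → ℝ≥0∞} {a : ℝ≥0∞} (ha : a ≠ ∞)
    (hf : Tendsto f atTop (nhds a)) (hh : Tendsto h atTop (nhds 0)) :
    Tendsto (fun N => f N * h N) atTop (nhds 0) := by
  have := ENNReal.Tendsto.mul hf (Or.inr (by simp)) hh (Or.inr ha)
  simpa using this

end AuxProb

/-- convergence of the sample mean and sample covariance for nearly i.i.d.
exchangeable ensembles. If for each `N` the stacked ensemble `[X_N; U_N]` (of size `N + 1`)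
is exchangeable, the members of `U_N` are i.i.d., `U_{N1} ∈ L⁴` with distribution independent
of `N`, and `‖X_{N1} − U_{N1}‖₄ → 0`, then the sample mean `X̄_N` converges in probability to
`E(U_{N1})` and the sample covariance `C(X_N)` converges in probability to `Cov(U_{N1})`. -/
theorem sampleMean_sampleCov_tendstoInMeasure_of_exchangeable
    {n : ℕ} (X U : (N : ℕ) → Fin (N + 1) → Ω → Fin n → ℝ)
    (hXmeas : ∀ N i, Measurable (X N i)) (hUmeas : ∀ N i, Measurable (U N i))
    (hex : ∀ N, Exchangeable (fun i ω => (X N i ω, U N i ω)))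
    (hUindep : ∀ N, iIndepFun (U N) ℙ)
    (hUid : ∀ (N M : ℕ) (i : Fin (N + 1)),
      Measure.map (U N i) (ℙ : Measure Ω) = Measure.map (U M 0) (ℙ : Measure Ω))
    (hUL4 : ∀ N, MemLp (fun ω => toEuc (U N 0 ω)) 4 ℙ)
    (hXU : Tendsto (fun N => vLp 4 (fun ω => X N 0 ω - U N 0 ω)) atTop (nhds 0)) :
    TendstoInMeasure ℙ (fun N => sampleMean (X N)) atTop (fun _ => ∫ ω, U 0 0 ω) ∧
      TendstoInMeasure ℙ (fun N ω => opCLM (sampleCov (X N) ω)) atTop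
        (fun _ => opCLM (covMat (U 0 0) (U 0 0))) := by
  classical
  set g : Ω → Fin n → ℝ := U 0 0 with hgdef
  have hgmeas : Measurable g := hUmeas 0 0
  set m : Fin n → ℝ := ∫ ω, g ω with hmdef
  set ε : ℕ → ℝ≥0∞ := fun N => eLpNorm (fun ω => toEuc (X N 0 ω - U N 0 ω)) 4 ℙ with hεdef
  have hεt : Tendsto ε atTop (nhds 0) := by
    have he : ∀ N, vLp 4 (fun ω => X N 0 ω - U N 0 ω) = ε N := by
      intro N
      rw [vLp, hεdef, ENNReal.ofReal_ofNat]
    simpa [he] using hXU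
  -- componentwise measurability
  have hXj : ∀ N (i : Fin (N+1)) (j : Fin n), Measurable fun ω => X N i ω j :=
    fun N i j => (measurable_pi_apply j).comp (hXmeas N i)
  have hUj : ∀ N (i : Fin (N+1)) (j : Fin n), Measurable fun ω => U N i ω j :=
    fun N i j => (measurable_pi_apply j).comp (hUmeas N i)
  have hgj : ∀ j, Measurable fun ω => g ω j := fun j => hUj 0 0 j
  have hpm : ∀ N (i : Fin (N+1)), Measurable fun ω => (X N i ω, U N i ω) :=
    fun N i => (hXmeas N i).prodMk (hUmeas N i)
  -- identical distribution of the pairs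
  have hpair : ∀ N (i : Fin (N+1)),
      Measure.map (fun ω => (X N i ω, U N i ω)) ℙ
        = Measure.map (fun ω => (X N 0 ω, U N 0 ω)) ℙ := by
    intro N i
    have hσ := hex N (Equiv.swap 0 i)
    have hm1 : Measurable fun ω (k : Fin (N+1)) =>
        (X N ((Equiv.swap 0 i) k) ω, U N ((Equiv.swap 0 i) k) ω) :=
      measurable_pi_lambda _ fun k => hpm N _
    have hm2 : Measurable fun ω (k : Fin (N+1)) => (X N k ω, U N k ω) :=
      measurable_pi_lambda _ fun k => hpm N k
    have h0 := congrArg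
      (Measure.map fun v : Fin (N+1) → (Fin n → ℝ) × (Fin n → ℝ) => v 0) hσ
    rw [Measure.map_map (measurable_pi_apply 0) hm1,
      Measure.map_map (measurable_pi_apply 0) hm2] at h0
    simpa [Function.comp_def, Equiv.swap_apply_left] using h0
  have hUlaw : ∀ N (i : Fin (N+1)), Measure.map (U N i) ℙ = Measure.map g ℙ :=
    fun N i => hUid N 0 i
  set K : ℝ≥0∞ := eLpNorm (fun ω => toEuc (g ω)) 4 ℙ with hKdef
  have hKne : K ≠ ∞ := (hUL4 0).2.ne
  have hgL4 : MemLp (fun ω => toEuc (g ω)) 4 ℙ := hUL4 0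
  -- componentwise moment bounds
  have hgj4K : ∀ j, eLpNorm (fun ω => g ω j) 4 ℙ ≤ K := by
    intro j
    rw [hKdef]
    refine eLpNorm_mono fun ω => ?_
    rw [Real.norm_eq_abs]
    exact abs_apply_le_norm_toEuc (g ω) j
  have hUcomp : ∀ (φ : (Fin n → ℝ) → ℝ), Measurable φ → ∀ (p : ℝ≥0∞) N (i : Fin (N+1)),
      eLpNorm (fun ω => φ (U N i ω)) p ℙ = eLpNorm (fun ω => φ (g ω)) p ℙ :=
    fun φ hφ p N i =>
      eLpNorm_eq_of_map_eq (hUmeas N i) hgmeas (hUlaw N i) hφ.stronglyMeasurable p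
  have hUjle : ∀ (p : ℝ≥0∞), p ≤ 4 → ∀ N (i : Fin (N+1)) (j : Fin n),
      eLpNorm (fun ω => U N i ω j) p ℙ ≤ K := by
    intro p hp N i j
    rw [hUcomp (fun v => v j) (measurable_pi_apply j) p N i]
    exact le_trans (eLpNorm_le_eLpNorm_of_exponent_le hp
      (hgj j).aestronglyMeasurable) (hgj4K j)
  have hXUle : ∀ (p : ℝ≥0∞), p ≤ 4 → ∀ N (i : Fin (N+1)) (j : Fin n),
      eLpNorm (fun ω => X N i ω j - U N i ω j) p ℙ ≤ ε N := by
    intro p hp N i j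
    have hφm : Measurable fun q : (Fin n → ℝ) × (Fin n → ℝ) => q.1 j - q.2 j :=
      ((measurable_pi_apply j).comp measurable_fst).sub
        ((measurable_pi_apply j).comp measurable_snd)
    have ht := eLpNorm_eq_of_map_eq (hpm N i) (hpm N 0) (hpair N i)
      hφm.stronglyMeasurable p
    rw [show (fun ω => X N i ω j - U N i ω j)
        = fun ω => (fun q : (Fin n → ℝ) × (Fin n → ℝ) => q.1 j - q.2 j) (X N i ω, U N i ω)
        from rfl, ht]
    refine le_trans (eLpNorm_le_eLpNorm_of_exponent_le hp
      ((hXj N 0 j).sub (hUj N 0 j)).aestronglyMeasurable) ?_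
    rw [hεdef]
    refine eLpNorm_mono fun ω => ?_
    rw [Real.norm_eq_abs]
    have h1 := abs_apply_le_norm_toEuc (X N 0 ω - U N 0 ω) j
    rw [Pi.sub_apply] at h1
    exact h1
  have hXle : ∀ (p : ℝ≥0∞), p ≤ 4 → 1 ≤ p → ∀ N (i : Fin (N+1)) (j : Fin n),
      eLpNorm (fun ω => X N i ω j) p ℙ ≤ K + ε N := by
    intro p hp hp1 N i j
    have hid : (fun ω => X N i ω j)
        = (fun ω => U N i ω j) + fun ω => X N i ω j - U N i ω j := by
      funext ω; simp
    rw [hid]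
    refine le_trans (eLpNorm_add_le (hUj N i j).aestronglyMeasurable
      ((hXj N i j).sub (hUj N i j)).aestronglyMeasurable hp1) ?_
    exact add_le_add (hUjle p hp N i j) (hXUle p hp N i j)
  -- integrability and the mean vector
  have hgInt : Integrable g ℙ := by
    rw [← memLp_one_iff_integrable]
    refine MemLp.of_le (hgL4.mono_exponent (by norm_num)) hgmeas.aestronglyMeasurable ?_
    exact Eventually.of_forall fun ω => norm_pi_le_norm_toEuc (g ω)
  have hmj : ∀ j, m j = ∫ ω, g ω j := by
    intro j
    rw [hmdef]
    exact ((ContinuousLinearMap.proj (R := ℝ) (φ := fun _ : Fin n => ℝ) j).integral_comp_comm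
      hgInt).symm
  -- MemLp of components of g
  have hgjmem4 : ∀ j, MemLp (fun ω => g ω j) 4 ℙ := fun j =>
    MemLp.of_le hgL4 (hgj j).aestronglyMeasurable (Eventually.of_forall fun ω => by
      rw [Real.norm_eq_abs]
      exact abs_apply_le_norm_toEuc (g ω) j)
  have hgjmem2 : ∀ j, MemLp (fun ω => g ω j) 2 ℙ := fun j =>
    (hgjmem4 j).mono_exponent (by norm_num)
  have h1244 : (1 : ℝ≥0∞) / 2 = 1 / 4 + 1 / 4 := by
    have h4 : (4:ℝ≥0∞)⁻¹ + 4⁻¹ = 2⁻¹ := by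
      rw [← two_mul, show (4:ℝ≥0∞) = 2*2 by norm_num,
        ENNReal.mul_inv (by norm_num) (by norm_num), ← mul_assoc,
        ENNReal.mul_inv_cancel two_ne_zero ENNReal.ofNat_ne_top, one_mul]
    simp only [one_div]
    exact h4.symm
  have hgjkmem2 : ∀ j k, MemLp (fun ω => g ω j * g ω k) 2 ℙ := by
    intro j k
    have h := MemLp.smul (p := 4) (q := 4) (r := 2) (hgjmem4 k) (hgjmem4 j)
      (hpqr := ⟨by simpa only [one_div] using h1244.symm⟩)
    have he : ((fun ω => g ω j) • fun ω => g ω k) = fun ω => g ω j * g ω k := by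
      funext ω; simp
    rwa [he] at h
  -- LLN for transformed U-ensembles
  have hULLN : ∀ (φ : (Fin n → ℝ) → ℝ), Measurable φ →
      MemLp (fun ω => φ (g ω)) 2 ℙ → ∀ N : ℕ,
      eLpNorm (fun ω => ((N:ℝ)+1)⁻¹ * (∑ i, φ (U N i ω)) - ∫ ω', φ (g ω')) 2 ℙ
        ≤ ENNReal.ofReal
            (Real.sqrt (variance (fun ω => φ (g ω)) ℙ / ((N:ℝ)+1))) := by
    intro φ hφ hφ2 N
    exact eLpNorm_mean_sub_le (fun i ω => φ (U N i ω)) (fun i => hφ.comp (hUmeas N i))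
      ((hUindep N).comp _ fun i => hφ)
      (fun i => memℒp_of_map_eq (hUmeas N i) hgmeas (hUlaw N i) hφ.stronglyMeasurable hφ2)
      _ _
      (fun i => integral_eq_of_map_eq (hUmeas N i) hgmeas (hUlaw N i) hφ.stronglyMeasurable)
      (fun i => variance_eq_of_map_eq (hUmeas N i) hgmeas (hUlaw N i) hφ)
  -- sample mean entry formula
  have hsmapp : ∀ N ω (j : Fin n), sampleMean (X N) ω j = ((N:ℝ)+1)⁻¹ * ∑ i, X N i ω j := by
    intro N ω j
    rw [sampleMean, Pi.smul_apply, Finset.sum_apply, smul_eq_mul]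
    push_cast
    ring
  -- the L² mean bound
  have hMean2 : ∀ (j : Fin n) (N : ℕ),
      eLpNorm (fun ω => sampleMean (X N) ω j - m j) 2 ℙ
        ≤ ε N + ENNReal.ofReal
            (Real.sqrt (variance (fun ω => g ω j) ℙ / ((N:ℝ)+1))) := by
    intro j N
    have hdec : (fun ω => sampleMean (X N) ω j - m j)
        = (fun ω => ((N:ℝ)+1)⁻¹ * ∑ i, (X N i ω j - U N i ω j))
          + fun ω => ((N:ℝ)+1)⁻¹ * (∑ i, U N i ω j) - m j := by
      funext ω
      rw [Pi.add_apply, hsmapp N ω j, Finset.sum_sub_distrib, mul_sub]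
      ring
    rw [hdec]
    have ha : AEStronglyMeasurable
        (fun ω => ((N:ℝ)+1)⁻¹ * ∑ i, (X N i ω j - U N i ω j)) ℙ :=
      ((Finset.measurable_sum _ fun i _ =>
        (hXj N i j).sub (hUj N i j)).const_mul _).aestronglyMeasurable
    have hb : AEStronglyMeasurable
        (fun ω => ((N:ℝ)+1)⁻¹ * (∑ i, U N i ω j) - m j) ℙ :=
      (((Finset.measurable_sum _ fun i _ => hUj N i j).const_mul _).sub
        measurable_const).aestronglyMeasurable
    refine le_trans (eLpNorm_add_le ha hb one_le_two) (add_le_add ?_ ?_)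
    · exact eLpNorm_avg_le one_le_two _
        (fun i => ((hXj N i j).sub (hUj N i j)).aestronglyMeasurable)
        (fun i => hXUle 2 (by norm_num) N i j)
    · rw [hmj j]
      exact hULLN (fun v => v j) (measurable_pi_apply j) (hgjmem2 j) N
  have hsmMeas : ∀ N, Measurable (sampleMean (X N)) := by
    intro N
    apply measurable_pi_lambda
    intro j
    have he : (fun ω => sampleMean (X N) ω j) = fun ω => ((N:ℝ)+1)⁻¹ * ∑ i, X N i ω j :=
      funext fun ω => hsmapp N ω j
    rw [he]
    exact (Finset.measurable_sum _ fun i _ => hXj N i j).const_mul _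
  have hmean : TendstoInMeasure ℙ (fun N => sampleMean (X N)) atTop (fun _ => m) := by
    apply tendstoInMeasure_of_tendsto_eLpNorm (p := 1) one_ne_zero
      (fun N => (hsmMeas N).aestronglyMeasurable) aestronglyMeasurable_const
    have hub : ∀ N, eLpNorm (sampleMean (X N) - fun _ => m) 1 ℙ
        ≤ ∑ j : Fin n, (ε N + ENNReal.ofReal
            (Real.sqrt (variance (fun ω => g ω j) ℙ / ((N:ℝ)+1)))) := by
      intro N
      have h1 : ∀ ω, ‖sampleMean (X N) ω - m‖
          ≤ ∑ j : Fin n, |sampleMean (X N) ω j - m j| := by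
        intro ω
        have h2 := norm_pi_le_sum (sampleMean (X N) ω - m)
        simpa [Pi.sub_apply] using h2
      calc eLpNorm (sampleMean (X N) - fun _ => m) 1 ℙ
          ≤ eLpNorm (fun ω => ∑ j : Fin n, |sampleMean (X N) ω j - m j|) 1 ℙ := by
            refine eLpNorm_mono_real fun ω => ?_
            simpa [Pi.sub_apply] using h1 ω
      _ ≤ ∑ j : Fin n, eLpNorm (fun ω => |sampleMean (X N) ω j - m j|) 1 ℙ := by
            have hs := eLpNorm_sum_le (μ := (ℙ : Measure Ω)) (p := 1)
              (f := fun (j : Fin n) (ω : Ω) => |sampleMean (X N) ω j - m j|)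
              (s := Finset.univ)
              (fun j _ => (((measurable_pi_apply j).comp (hsmMeas N)).sub
                measurable_const).abs.aestronglyMeasurable) le_rfl
            refine le_trans (le_of_eq ?_) hs
            congr 1
            funext ω
            simp [Finset.sum_apply]
      _ = ∑ j : Fin n, eLpNorm (fun ω => sampleMean (X N) ω j - m j) 1 ℙ := by
            refine Finset.sum_congr rfl fun j _ => ?_
            have habs : (fun ω => |sampleMean (X N) ω j - m j|)
                = fun ω => ‖sampleMean (X N) ω j - m j‖ := by
              funext ω; rw [Real.norm_eq_abs]
            rw [habs, eLpNorm_norm]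
      _ ≤ _ := by
            refine Finset.sum_le_sum fun j _ => ?_
            refine le_trans (eLpNorm_le_eLpNorm_of_exponent_le one_le_two
              (((measurable_pi_apply j).comp (hsmMeas N)).sub
                measurable_const).aestronglyMeasurable) (hMean2 j N)
    refine tendsto_of_tendsto_of_tendsto_of_le_of_le tendsto_const_nhds ?_
      (fun N => zero_le) hub
    have hsum : Tendsto (fun N => ∑ j : Fin n, (ε N + ENNReal.ofReal
        (Real.sqrt (variance (fun ω => g ω j) ℙ / ((N:ℝ)+1))))) atTop
        (nhds (∑ _j : Fin n, (0:ℝ≥0∞))) :=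
      tendsto_finset_sum _ fun j _ => by
        simpa using hεt.add (tendsto_ofReal_sqrt_div_succ (variance (fun ω => g ω j) ℙ))
    simpa using hsum
  -- sample covariance entry formula
  have hscapp : ∀ N ω (j k : Fin n), sampleCov (X N) ω j k
      = ((N:ℝ)+1)⁻¹ * ∑ i, X N i ω j * X N i ω k
        - sampleMean (X N) ω j * sampleMean (X N) ω k := by
    intro N ω j k
    rw [sampleCov]
    simp only [Matrix.sub_apply, Matrix.smul_apply, Matrix.sum_apply, vecMulVec_apply,
      smul_eq_mul]
    push_cast
    ring
  -- L² bound on the sample mean components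
  have hXbar2 : ∀ (j : Fin n) (N : ℕ),
      eLpNorm (fun ω => sampleMean (X N) ω j) 2 ℙ ≤ K + ε N := by
    intro j N
    have he : (fun ω => sampleMean (X N) ω j) = fun ω => ((N:ℝ)+1)⁻¹ * ∑ i, X N i ω j :=
      funext fun ω => hsmapp N ω j
    rw [he]
    exact eLpNorm_avg_le one_le_two _ (fun i => (hXj N i j).aestronglyMeasurable)
      (fun i => hXle 2 (by norm_num) one_le_two N i j)
  -- T1 bound
  have hT1 : ∀ (j k : Fin n) (N : ℕ),
      eLpNorm (fun ω =>
          ((N:ℝ)+1)⁻¹ * ∑ i, (X N i ω j * X N i ω k - U N i ω j * U N i ω k)) 1 ℙ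
        ≤ (K + ε N) * ε N + ε N * K := by
    intro j k N
    refine eLpNorm_avg_le le_rfl _
      (fun i => (((hXj N i j).mul (hXj N i k)).sub
        ((hUj N i j).mul (hUj N i k))).aestronglyMeasurable) (fun i => ?_)
    have hφm : Measurable fun q : (Fin n → ℝ) × (Fin n → ℝ) =>
        q.1 j * q.1 k - q.2 j * q.2 k :=
      (((measurable_pi_apply j).comp measurable_fst).mul
        ((measurable_pi_apply k).comp measurable_fst)).sub
        (((measurable_pi_apply j).comp measurable_snd).mul
          ((measurable_pi_apply k).comp measurable_snd))
    have ht := eLpNorm_eq_of_map_eq (hpm N i) (hpm N 0) (hpair N i)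
      hφm.stronglyMeasurable 1
    show eLpNorm (fun ω => X N i ω j * X N i ω k - U N i ω j * U N i ω k) 1 ℙ ≤ _
    rw [show (fun ω => X N i ω j * X N i ω k - U N i ω j * U N i ω k)
        = fun ω => (fun q : (Fin n → ℝ) × (Fin n → ℝ) => q.1 j * q.1 k - q.2 j * q.2 k)
            (X N i ω, U N i ω) from rfl, ht]
    have hdec : (fun ω => (fun q : (Fin n → ℝ) × (Fin n → ℝ) =>
          q.1 j * q.1 k - q.2 j * q.2 k) (X N 0 ω, U N 0 ω))
        = (fun ω => X N 0 ω j * (X N 0 ω k - U N 0 ω k))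
          + fun ω => (X N 0 ω j - U N 0 ω j) * U N 0 ω k := by
      funext ω
      simp only [Pi.add_apply]
      ring
    rw [hdec]
    have ha : AEStronglyMeasurable
        (fun ω => X N 0 ω j * (X N 0 ω k - U N 0 ω k)) ℙ :=
      ((hXj N 0 j).mul ((hXj N 0 k).sub (hUj N 0 k))).aestronglyMeasurable
    have hb : AEStronglyMeasurable
        (fun ω => (X N 0 ω j - U N 0 ω j) * U N 0 ω k) ℙ :=
      (((hXj N 0 j).sub (hUj N 0 j)).mul (hUj N 0 k)).aestronglyMeasurable
    refine le_trans (eLpNorm_add_le ha hb le_rfl) (add_le_add ?_ ?_)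
    · refine le_trans (eLpNorm_mul_le_two_two (hXj N 0 j).aestronglyMeasurable
        ((hXj N 0 k).sub (hUj N 0 k)).aestronglyMeasurable) ?_
      exact mul_le_mul' (hXle 2 (by norm_num) one_le_two N 0 j)
        (hXUle 2 (by norm_num) N 0 k)
    · refine le_trans (eLpNorm_mul_le_two_two
        ((hXj N 0 j).sub (hUj N 0 j)).aestronglyMeasurable
        (hUj N 0 k).aestronglyMeasurable) ?_
      exact mul_le_mul' (hXUle 2 (by norm_num) N 0 j) (hUjle 2 (by norm_num) N 0 k)
  -- T3 bound
  have hT3 : ∀ (j k : Fin n) (N : ℕ),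
      eLpNorm (fun ω => sampleMean (X N) ω j * sampleMean (X N) ω k - m j * m k) 1 ℙ
        ≤ (K + ε N) * (ε N + ENNReal.ofReal
              (Real.sqrt (variance (fun ω => g ω k) ℙ / ((N:ℝ)+1))))
          + ENNReal.ofReal |m k| * (ε N + ENNReal.ofReal
              (Real.sqrt (variance (fun ω => g ω j) ℙ / ((N:ℝ)+1)))) := by
    intro j k N
    have hdec : (fun ω => sampleMean (X N) ω j * sampleMean (X N) ω k - m j * m k)
        = (fun ω => sampleMean (X N) ω j * (sampleMean (X N) ω k - m k))
          + fun ω => m k * (sampleMean (X N) ω j - m j) := by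
      funext ω
      simp only [Pi.add_apply]
      ring
    rw [hdec]
    have hsj : Measurable fun ω => sampleMean (X N) ω j :=
      (measurable_pi_apply j).comp (hsmMeas N)
    have hsk : Measurable fun ω => sampleMean (X N) ω k :=
      (measurable_pi_apply k).comp (hsmMeas N)
    have ha : AEStronglyMeasurable
        (fun ω => sampleMean (X N) ω j * (sampleMean (X N) ω k - m k)) ℙ :=
      (hsj.mul (hsk.sub measurable_const)).aestronglyMeasurable
    have hb : AEStronglyMeasurable
        (fun ω => m k * (sampleMean (X N) ω j - m j)) ℙ :=
      ((hsj.sub measurable_const).const_mul _).aestronglyMeasurable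
    refine le_trans (eLpNorm_add_le ha hb le_rfl) (add_le_add ?_ ?_)
    · refine le_trans (eLpNorm_mul_le_two_two hsj.aestronglyMeasurable
        (hsk.sub measurable_const).aestronglyMeasurable) ?_
      exact mul_le_mul' (hXbar2 j N) (hMean2 k N)
    · have hsm2 : (fun ω => m k * (sampleMean (X N) ω j - m j))
          = (m k) • fun ω => sampleMean (X N) ω j - m j := by
        funext ω; simp
      rw [hsm2, eLpNorm_const_smul]
      rw [Real.enorm_eq_ofReal_abs]
      refine mul_le_mul' le_rfl ?_
      refine le_trans (eLpNorm_le_eLpNorm_of_exponent_le one_le_two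
        (hsj.sub measurable_const).aestronglyMeasurable) (hMean2 j N)
  -- per-entry bound for the sample covariance
  have hEntry : ∀ (j k : Fin n) (N : ℕ),
      eLpNorm (fun ω => sampleCov (X N) ω j k - covMat g g j k) 1 ℙ
        ≤ (((K + ε N) * ε N + ε N * K)
            + ENNReal.ofReal
                (Real.sqrt (variance (fun ω => g ω j * g ω k) ℙ / ((N:ℝ)+1))))
          + ((K + ε N) * (ε N + ENNReal.ofReal
                (Real.sqrt (variance (fun ω => g ω k) ℙ / ((N:ℝ)+1))))
              + ENNReal.ofReal |m k| * (ε N + ENNReal.ofReal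
                (Real.sqrt (variance (fun ω => g ω j) ℙ / ((N:ℝ)+1))))) := by
    intro j k N
    have hQ : covMat g g j k = (∫ ω, g ω j * g ω k) - m j * m k := by
      rw [covMat, cov, hmj j, hmj k]
    have hdec : (fun ω => sampleCov (X N) ω j k - covMat g g j k)
        = ((fun ω =>
              ((N:ℝ)+1)⁻¹ * ∑ i, (X N i ω j * X N i ω k - U N i ω j * U N i ω k))
            + fun ω =>
              ((N:ℝ)+1)⁻¹ * (∑ i, U N i ω j * U N i ω k) - ∫ ω', g ω' j * g ω' k)
          - fun ω => sampleMean (X N) ω j * sampleMean (X N) ω k - m j * m k := by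
      funext ω
      simp only [Pi.add_apply, Pi.sub_apply]
      rw [hscapp N ω j k, hQ, Finset.sum_sub_distrib, mul_sub]
      ring
    rw [hdec]
    have ha : AEStronglyMeasurable (fun ω =>
        ((N:ℝ)+1)⁻¹ * ∑ i, (X N i ω j * X N i ω k - U N i ω j * U N i ω k)) ℙ :=
      ((Finset.measurable_sum _ fun i _ => ((hXj N i j).mul (hXj N i k)).sub
        ((hUj N i j).mul (hUj N i k))).const_mul _).aestronglyMeasurable
    have hb : AEStronglyMeasurable (fun ω =>
        ((N:ℝ)+1)⁻¹ * (∑ i, U N i ω j * U N i ω k) - ∫ ω', g ω' j * g ω' k) ℙ :=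
      (((Finset.measurable_sum _ fun i _ => (hUj N i j).mul (hUj N i k)).const_mul _).sub
        measurable_const).aestronglyMeasurable
    have hc : AEStronglyMeasurable (fun ω =>
        sampleMean (X N) ω j * sampleMean (X N) ω k - m j * m k) ℙ :=
      ((((measurable_pi_apply j).comp (hsmMeas N)).mul
        ((measurable_pi_apply k).comp (hsmMeas N))).sub measurable_const).aestronglyMeasurable
    refine le_trans (eLpNorm_sub_le (ha.add hb) hc le_rfl) ?_
    refine add_le_add (le_trans (eLpNorm_add_le ha hb le_rfl) (add_le_add ?_ ?_)) ?_
    · exact hT1 j k N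
    · exact le_trans (eLpNorm_le_eLpNorm_of_exponent_le one_le_two hb)
        (hULLN (fun v => v j * v k)
          ((measurable_pi_apply j).mul (measurable_pi_apply k)) (hgjkmem2 j k) N)
    · exact hT3 j k N
  -- measurability of the sample covariance entries
  have hscj : ∀ N (j k : Fin n), Measurable fun ω => sampleCov (X N) ω j k := by
    intro N j k
    have he : (fun ω => sampleCov (X N) ω j k)
        = fun ω => ((N:ℝ)+1)⁻¹ * ∑ i, X N i ω j * X N i ω k
            - sampleMean (X N) ω j * sampleMean (X N) ω k :=
      funext fun ω => hscapp N ω j k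
    rw [he]
    exact ((Finset.measurable_sum _ fun i _ => (hXj N i j).mul (hXj N i k)).const_mul _).sub
      (((measurable_pi_apply j).comp (hsmMeas N)).mul
        ((measurable_pi_apply k).comp (hsmMeas N)))
  have hrep : ∀ A : Matrix (Fin n) (Fin n) ℝ, opCLM A
      = ∑ j : Fin n, ∑ k : Fin n, A j k • opCLM (Matrix.single j k 1) := by
    intro A
    have h1 : A = ∑ j : Fin n, ∑ k : Fin n, A j k • Matrix.single j k (1:ℝ) := by
      simpa [Matrix.smul_single] using Matrix.matrix_eq_sum_single A
    calc opCLM A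
        = opCLM (∑ j : Fin n, ∑ k : Fin n, A j k • Matrix.single j k (1:ℝ)) := by
          rw [← h1]
    _ = _ := by
          have hL : ∀ B : Matrix (Fin n) (Fin n) ℝ, opCLM B =
              (Matrix.toEuclideanLin.trans LinearMap.toContinuousLinearMap :
                Matrix (Fin n) (Fin n) ℝ ≃ₗ[ℝ]
                  (EuclideanSpace ℝ (Fin n) →L[ℝ] EuclideanSpace ℝ (Fin n))) B :=
            fun _ => rfl
          simp_rw [hL]
          rw [map_sum]
          refine Finset.sum_congr rfl fun j _ => ?_
          rw [map_sum]
          refine Finset.sum_congr rfl fun k _ => ?_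
          rw [_root_.map_smul]
  have hopMeas : ∀ N, AEStronglyMeasurable (fun ω => opCLM (sampleCov (X N) ω)) ℙ := by
    intro N
    have he : (fun ω => opCLM (sampleCov (X N) ω))
        = fun ω => ∑ j : Fin n, ∑ k : Fin n,
            sampleCov (X N) ω j k • opCLM (Matrix.single j k 1) := by
      funext ω; exact hrep _
    rw [he]
    refine (Finset.stronglyMeasurable_fun_sum _ fun j _ =>
      Finset.stronglyMeasurable_fun_sum _ fun k _ => ?_).aestronglyMeasurable
    exact ((hscj N j k).stronglyMeasurable).smul_const _
  have hKεt : Tendsto (fun N => K + ε N) atTop (nhds K) := by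
    simpa using (tendsto_const_nhds (x := K) (f := atTop)).add hεt
  have hEB : ∀ j k : Fin n, Tendsto (fun N : ℕ =>
      (((K + ε N) * ε N + ε N * K)
            + ENNReal.ofReal
                (Real.sqrt (variance (fun ω => g ω j * g ω k) ℙ / ((N:ℝ)+1))))
          + ((K + ε N) * (ε N + ENNReal.ofReal
                (Real.sqrt (variance (fun ω => g ω k) ℙ / ((N:ℝ)+1))))
              + ENNReal.ofReal |m k| * (ε N + ENNReal.ofReal
                (Real.sqrt (variance (fun ω => g ω j) ℙ / ((N:ℝ)+1)))))) atTop
      (nhds 0) := by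
    intro j k
    have t1 : Tendsto (fun N : ℕ => (K + ε N) * ε N) atTop (nhds 0) :=
      ennreal_tendsto_mul_zero hKne hKεt hεt
    have t2 : Tendsto (fun N : ℕ => ε N * K) atTop (nhds 0) := by
      simpa [mul_comm] using
        ennreal_tendsto_mul_zero hKne (tendsto_const_nhds (x := K) (f := atTop)) hεt
    have t3 : Tendsto (fun N : ℕ => ENNReal.ofReal
        (Real.sqrt (variance (fun ω => g ω j * g ω k) ℙ / ((N:ℝ)+1)))) atTop (nhds 0) :=
      tendsto_ofReal_sqrt_div_succ _
    have t4 : Tendsto (fun N : ℕ => (K + ε N) * (ε N + ENNReal.ofReal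
        (Real.sqrt (variance (fun ω => g ω k) ℙ / ((N:ℝ)+1))))) atTop (nhds 0) :=
      ennreal_tendsto_mul_zero hKne hKεt
        (by simpa using hεt.add (tendsto_ofReal_sqrt_div_succ (variance (fun ω => g ω k) ℙ)))
    have t5 : Tendsto (fun N : ℕ => ENNReal.ofReal |m k| * (ε N + ENNReal.ofReal
        (Real.sqrt (variance (fun ω => g ω j) ℙ / ((N:ℝ)+1))))) atTop (nhds 0) :=
      ennreal_tendsto_mul_zero ENNReal.ofReal_ne_top
        (tendsto_const_nhds (x := ENNReal.ofReal |m k|) (f := atTop))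
        (by simpa using hεt.add (tendsto_ofReal_sqrt_div_succ (variance (fun ω => g ω j) ℙ)))
    have := ((t1.add t2).add t3).add (t4.add t5)
    simpa using this
  -- the covariance convergence
  have hcov : TendstoInMeasure ℙ (fun N ω => opCLM (sampleCov (X N) ω)) atTop
      (fun _ => opCLM (covMat g g)) := by
    apply tendstoInMeasure_of_tendsto_eLpNorm (p := 1) one_ne_zero hopMeas
      aestronglyMeasurable_const
    have hub : ∀ N, eLpNorm ((fun ω => opCLM (sampleCov (X N) ω))
          - fun _ => opCLM (covMat g g)) 1 ℙ
        ≤ ∑ j : Fin n, ∑ k : Fin n,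
          ((((K + ε N) * ε N + ε N * K)
            + ENNReal.ofReal
                (Real.sqrt (variance (fun ω => g ω j * g ω k) ℙ / ((N:ℝ)+1))))
          + ((K + ε N) * (ε N + ENNReal.ofReal
                (Real.sqrt (variance (fun ω => g ω k) ℙ / ((N:ℝ)+1))))
              + ENNReal.ofReal |m k| * (ε N + ENNReal.ofReal
                (Real.sqrt (variance (fun ω => g ω j) ℙ / ((N:ℝ)+1)))))) := by
      intro N
      have h1 : ∀ ω, ‖opCLM (sampleCov (X N) ω) - opCLM (covMat g g)‖
          ≤ ∑ j : Fin n, ∑ k : Fin n, |sampleCov (X N) ω j k - covMat g g j k| := by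
        intro ω
        rw [← opCLM_sub]
        refine le_trans (opCLM_norm_le _) ?_
        refine Finset.sum_le_sum fun j _ => Finset.sum_le_sum fun k _ => ?_
        rw [Matrix.sub_apply]
      calc eLpNorm ((fun ω => opCLM (sampleCov (X N) ω))
              - fun _ => opCLM (covMat g g)) 1 ℙ
          ≤ eLpNorm (fun ω => ∑ j : Fin n, ∑ k : Fin n,
              |sampleCov (X N) ω j k - covMat g g j k|) 1 ℙ := by
            refine eLpNorm_mono_real fun ω => ?_
            rw [Pi.sub_apply]
            exact h1 ω
      _ ≤ ∑ j : Fin n, eLpNorm (fun ω => ∑ k : Fin n,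
              |sampleCov (X N) ω j k - covMat g g j k|) 1 ℙ := by
            have hs := eLpNorm_sum_le (μ := (ℙ : Measure Ω)) (p := 1)
              (f := fun (j : Fin n) (ω : Ω) => ∑ k : Fin n,
                |sampleCov (X N) ω j k - covMat g g j k|)
              (s := Finset.univ)
              (fun j _ => (Finset.measurable_sum _ fun k _ =>
                (((hscj N j k).sub measurable_const).abs)).aestronglyMeasurable) le_rfl
            refine le_trans (le_of_eq ?_) hs
            congr 1
            funext ω
            simp [Finset.sum_apply]
      _ ≤ _ := by
            refine Finset.sum_le_sum fun j _ => ?_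
            have hs := eLpNorm_sum_le (μ := (ℙ : Measure Ω)) (p := 1)
              (f := fun (k : Fin n) (ω : Ω) =>
                |sampleCov (X N) ω j k - covMat g g j k|)
              (s := Finset.univ)
              (fun k _ => (((hscj N j k).sub measurable_const).abs).aestronglyMeasurable) le_rfl
            refine le_trans (le_trans (le_of_eq ?_) hs) ?_
            · congr 1
              funext ω
              simp [Finset.sum_apply]
            · refine Finset.sum_le_sum fun k _ => ?_
              beta_reduce
              have habs : (fun ω => |sampleCov (X N) ω j k - covMat g g j k|)
                  = fun ω => ‖sampleCov (X N) ω j k - covMat g g j k‖ := by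
                funext ω; rw [Real.norm_eq_abs]
              rw [habs, eLpNorm_norm]
              exact hEntry j k N
    refine tendsto_of_tendsto_of_tendsto_of_le_of_le tendsto_const_nhds ?_
      (fun N => zero_le) hub
    have hsum : Tendsto (fun N : ℕ => ∑ j : Fin n, ∑ k : Fin n,
        ((((K + ε N) * ε N + ε N * K)
            + ENNReal.ofReal
                (Real.sqrt (variance (fun ω => g ω j * g ω k) ℙ / ((N:ℝ)+1))))
          + ((K + ε N) * (ε N + ENNReal.ofReal
                (Real.sqrt (variance (fun ω => g ω k) ℙ / ((N:ℝ)+1))))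
              + ENNReal.ofReal |m k| * (ε N + ENNReal.ofReal
                (Real.sqrt (variance (fun ω => g ω j) ℙ / ((N:ℝ)+1))))))) atTop
        (nhds (∑ _j : Fin n, ∑ _k : Fin n, (0:ℝ≥0∞))) :=
      tendsto_finset_sum _ fun j _ => tendsto_finset_sum _ fun k _ => hEB j k
    simpa using hsum
  exact ⟨hmean, hcov⟩
end
end

section
/- Let U_1,…,U_N be i.i.d. ℝ^n-valued random vectors with U_i ~ N(u, Q) (multivariate Gaussian, Q symmetric positive semidefinite), let D_1,…,D_N be i.i.d. ℝ^m-valued random vectors with D_i ~ N(d, R) (R symmetric positive definite), independent of (U_1,…,U_N). Let A ∈ ℝ^{n×n}, b ∈ ℝ^n, H ∈ ℝ^{m×n}, and define the forecast members U_i^f = A U_i + b, the forecast mean u^f = A u + b, the forecast covariance Q^f = A Q A^T, the Kalman gain L = Q^f H^T (H Q^f H^T + R)^{-1}, and the analysis members U_i' = U_i^f + L(D_i − H U_i^f), i = 1,…,N. Then U_1',…,U_N' are i.i.d. with U_1' ~ N(u', Q') where u' = u^f + L(d − H u^f) and Q' = (I − L H) Q^f. -/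
open MeasureTheory ProbabilityTheory Matrix Filter
open scoped ENNReal NNReal

noncomputable section

variable {Ω : Type*} [MeasureSpace Ω] [IsProbabilityMeasure (ℙ : Measure Ω)]

/-! ### Auxiliary lemmas for the proof -/

section Aux

open Real

lemma gaussianPDFReal_conv_aux (v₁ v₂ : ℝ≥0) (hv₁ : v₁ ≠ 0) (hv₂ : v₂ ≠ 0) (z : ℝ) :
    ∫ x, gaussianPDFReal 0 v₁ x * gaussianPDFReal 0 v₂ (z - x)
      = gaussianPDFReal 0 (v₁ + v₂) z := by
  have h1 : (0:ℝ) < v₁ := lt_of_le_of_ne (v₁.coe_nonneg) (by exact_mod_cast (Ne.symm hv₁))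
  have h2 : (0:ℝ) < v₂ := lt_of_le_of_ne (v₂.coe_nonneg) (by exact_mod_cast (Ne.symm hv₂))
  have hV : (0:ℝ) < (v₁:ℝ) + v₂ := by linarith
  set a : ℝ := ((v₁:ℝ) + v₂) / (2 * v₁ * v₂) with ha
  have hapos : 0 < a := by positivity
  set c : ℝ := (v₁:ℝ) * z / ((v₁:ℝ) + v₂) with hc
  have hpi : (0:ℝ) < π := pi_pos
  have key : ∀ x : ℝ, gaussianPDFReal 0 v₁ x * gaussianPDFReal 0 v₂ (z - x)
      = ((√(2 * π * v₁))⁻¹ * (√(2 * π * v₂))⁻¹ * rexp (-z^2 / (2 * ((v₁:ℝ)+v₂))))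
        * rexp (-a * (x - c)^2) := by
    intro x
    simp only [gaussianPDFReal, sub_zero]
    have hE : -x^2 / (2 * (v₁:ℝ)) + -(z - x)^2 / (2 * (v₂:ℝ))
        = -z^2 / (2 * ((v₁:ℝ)+v₂)) + (-a * (x - c)^2) := by
      rw [ha, hc]; field_simp; ring
    rw [mul_mul_mul_comm, ← Real.exp_add, hE, Real.exp_add, ← mul_assoc]
  simp_rw [key]
  rw [integral_const_mul, integral_sub_right_eq_self (fun x => rexp (-a * x^2)) c,
    integral_gaussian a]
  simp only [gaussianPDFReal, sub_zero]
  have hC : (√(2 * π * (v₁:ℝ)))⁻¹ * (√(2 * π * (v₂:ℝ)))⁻¹ * √(π / a)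
      = (√(2 * π * ((v₁:ℝ) + (v₂:ℝ))))⁻¹ := by
    rw [← Real.sqrt_inv, ← Real.sqrt_inv, ← Real.sqrt_inv,
      ← Real.sqrt_mul (le_of_lt (by positivity : (0:ℝ) < (2 * π * (v₁:ℝ))⁻¹)),
      ← Real.sqrt_mul (le_of_lt (by positivity : (0:ℝ) < (2 * π * (v₁:ℝ))⁻¹ * (2 * π * (v₂:ℝ))⁻¹))]
    congr 1
    rw [ha]
    field_simp
  push_cast
  rw [← hC]
  ring

lemma measurable_gaussianPDF2_aux (v : ℝ≥0) :
    Measurable (fun p : ℝ × ℝ => gaussianPDF p.1 v p.2) := by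
  have : ∀ p : ℝ × ℝ, gaussianPDF p.1 v p.2
      = ENNReal.ofReal (gaussianPDFReal 0 v (p.2 - p.1)) := by
    intro p
    rw [gaussianPDFReal_sub, zero_add]
    rfl
  simp_rw [this]
  exact (((measurable_gaussianPDFReal 0 v).comp (measurable_snd.sub measurable_fst))).ennreal_ofReal

lemma gaussianReal_conv_centered_aux (v₁ v₂ : ℝ≥0) (hv₁ : v₁ ≠ 0) (hv₂ : v₂ ≠ 0) :
    Measure.map (fun p : ℝ × ℝ => p.1 + p.2)
      ((gaussianReal 0 v₁).prod (gaussianReal 0 v₂)) = gaussianReal 0 (v₁ + v₂) := by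
  have hV : v₁ + v₂ ≠ 0 := by simp [hv₁]
  ext s hs
  rw [Measure.map_apply measurable_add hs,
    Measure.prod_apply (measurable_add hs)]
  have h1 : ∀ x : ℝ, (Prod.mk x ⁻¹' ((fun p : ℝ × ℝ => p.1 + p.2) ⁻¹' s))
      = (fun y => x + y) ⁻¹' s := by intro x; rfl
  have h2 : ∀ x : ℝ, (gaussianReal 0 v₂) ((fun y => x + y) ⁻¹' s)
      = ∫⁻ z in s, gaussianPDF x v₂ z := by
    intro x
    rw [← Measure.map_apply (measurable_const_add x) hs, gaussianReal_map_const_add,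
      zero_add, gaussianReal_apply _ hv₂]
  simp_rw [h1, h2]
  have h3 : ∀ x : ℝ, (∫⁻ z in s, gaussianPDF x v₂ z)
      = ∫⁻ z, s.indicator (fun z => gaussianPDF x v₂ z) z := by
    intro x
    rw [lintegral_indicator hs]
  simp_rw [h3]
  rw [gaussianReal_of_var_ne_zero _ hv₁,
    lintegral_withDensity_eq_lintegral_mul _ (measurable_gaussianPDF 0 v₁)]
  swap
  · exact Measurable.lintegral_prod_right
      ((measurable_gaussianPDF2_aux v₂).indicator (measurable_snd hs))
  simp only [Pi.mul_apply]
  have h4 : ∀ x : ℝ, gaussianPDF 0 v₁ x * ∫⁻ z, s.indicator (fun z => gaussianPDF x v₂ z) z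
      = ∫⁻ z, s.indicator (fun z => gaussianPDF 0 v₁ x * gaussianPDF x v₂ z) z := by
    intro x
    rw [← lintegral_const_mul _ ((measurable_gaussianPDF x v₂).indicator hs)]
    congr 1
    ext z
    by_cases hz : z ∈ s <;> simp [hz]
  simp_rw [h4]
  rw [lintegral_lintegral_swap]
  swap
  · apply Measurable.aemeasurable
    apply Measurable.indicator
    · exact ((measurable_gaussianPDF 0 v₁).comp measurable_fst).mul (measurable_gaussianPDF2_aux v₂)
    · exact measurable_snd hs
  have h5 : ∀ z : ℝ, (∫⁻ x, s.indicator (fun z => gaussianPDF 0 v₁ x * gaussianPDF x v₂ z) z)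
      = s.indicator (fun z => ∫⁻ x, gaussianPDF 0 v₁ x * gaussianPDF x v₂ z) z := by
    intro z
    by_cases hz : z ∈ s <;> simp [hz]
  simp_rw [h5]
  have h6 : ∀ z : ℝ, (∫⁻ x, gaussianPDF 0 v₁ x * gaussianPDF x v₂ z)
      = gaussianPDF 0 (v₁ + v₂) z := by
    intro z
    have hpt : ∀ x : ℝ, gaussianPDF 0 v₁ x * gaussianPDF x v₂ z
        = ENNReal.ofReal (gaussianPDFReal 0 v₁ x * gaussianPDFReal 0 v₂ (z - x)) := by
      intro x
      rw [gaussianPDF, gaussianPDF, ← ENNReal.ofReal_mul (gaussianPDFReal_nonneg _ _ _)]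
      congr 2
      rw [gaussianPDFReal_sub, zero_add]
    simp_rw [hpt]
    have hint : Integrable (fun x => gaussianPDFReal 0 v₁ x * gaussianPDFReal 0 v₂ (z - x)) := by
      have hb : ∀ x : ℝ, ‖gaussianPDFReal 0 v₂ (z - x)‖ ≤ (√(2 * π * v₂))⁻¹ := by
        intro x
        rw [Real.norm_of_nonneg (gaussianPDFReal_nonneg _ _ _), gaussianPDFReal]
        have : rexp (-(z - x - 0)^2 / (2 * v₂)) ≤ 1 := by
          apply Real.exp_le_one_iff.mpr
          apply div_nonpos_of_nonpos_of_nonneg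
          · simp [sq_nonneg]
          · positivity
        calc (√(2 * π * v₂))⁻¹ * rexp (-(z - x - 0)^2 / (2 * v₂))
            ≤ (√(2 * π * v₂))⁻¹ * 1 := by
              apply mul_le_mul_of_nonneg_left this (by positivity)
          _ = (√(2 * π * v₂))⁻¹ := mul_one _
      have := (integrable_gaussianPDFReal 0 v₁).bdd_mul
        (((measurable_gaussianPDFReal 0 v₂).comp
          (measurable_const.sub measurable_id)).aestronglyMeasurable)
        (c := (√(2 * π * v₂))⁻¹) (ae_of_all _ hb)
      simpa [mul_comm] using this
    rw [← ofReal_integral_eq_lintegral_ofReal hint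
      (ae_of_all _ (fun x => mul_nonneg (gaussianPDFReal_nonneg _ _ _)
        (gaussianPDFReal_nonneg _ _ _))),
      gaussianPDFReal_conv_aux v₁ v₂ hv₁ hv₂ z]
    rfl
  simp_rw [h6]
  rw [lintegral_indicator hs, ← gaussianReal_apply _ hV]

lemma gaussianReal_conv_aux (m₁ m₂ : ℝ) (v₁ v₂ : ℝ≥0) :
    Measure.map (fun p : ℝ × ℝ => p.1 + p.2)
      ((gaussianReal m₁ v₁).prod (gaussianReal m₂ v₂)) = gaussianReal (m₁ + m₂) (v₁ + v₂) := by
  have key : ∀ w₁ w₂ : ℝ≥0, Measure.map (fun p : ℝ × ℝ => p.1 + p.2)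
      ((gaussianReal 0 w₁).prod (gaussianReal 0 w₂)) = gaussianReal 0 (w₁ + w₂) := by
    intro w₁ w₂
    by_cases h1 : w₁ = 0
    · subst h1
      rw [gaussianReal_zero_var, Measure.dirac_prod, Measure.map_map measurable_add
        measurable_prodMk_left]
      simp only [Function.comp_def, zero_add]
      rw [Measure.map_id']
    by_cases h2 : w₂ = 0
    · subst h2
      rw [gaussianReal_zero_var, Measure.prod_dirac, Measure.map_map measurable_add
        measurable_prodMk_right]
      simp only [Function.comp_def, add_zero]
      rw [Measure.map_id']
    · exact gaussianReal_conv_centered_aux w₁ w₂ h1 h2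
  have e₁ : (gaussianReal 0 v₁).map (· + m₁) = gaussianReal m₁ v₁ := by
    rw [gaussianReal_map_add_const, zero_add]
  have e₂ : (gaussianReal 0 v₂).map (· + m₂) = gaussianReal m₂ v₂ := by
    rw [gaussianReal_map_add_const, zero_add]
  rw [← e₁, ← e₂, Measure.map_prod_map _ _ (measurable_add_const m₁) (measurable_add_const m₂),
    Measure.map_map measurable_add ((measurable_add_const m₁).prodMap (measurable_add_const m₂))]
  have hcomp : ((fun p : ℝ × ℝ => p.1 + p.2) ∘ Prod.map (· + m₁) (· + m₂))
      = (· + (m₁ + m₂)) ∘ (fun p : ℝ × ℝ => p.1 + p.2) := by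
    ext p
    simp [Prod.map]
    ring
  rw [hcomp, ← Measure.map_map (measurable_add_const (m₁ + m₂)) measurable_add, key,
    gaussianReal_map_add_const, zero_add]

lemma indep_add_gaussian_aux {X Y : Ω → ℝ} (hX : Measurable X) (hY : Measurable Y)
    (h : IndepFun X Y ℙ) (m₁ m₂ : ℝ) (v₁ v₂ : ℝ≥0)
    (hmX : Measure.map X ℙ = gaussianReal m₁ v₁) (hmY : Measure.map Y ℙ = gaussianReal m₂ v₂) :
    Measure.map (fun ω => X ω + Y ω) ℙ = gaussianReal (m₁ + m₂) (v₁ + v₂) := by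
  have hp : Measure.map (fun ω => (X ω, Y ω)) ℙ = (Measure.map X ℙ).prod (Measure.map Y ℙ) :=
    (indepFun_iff_map_prod_eq_prod_map_map hX.aemeasurable hY.aemeasurable).mp h
  rw [show (fun ω => X ω + Y ω) = (fun p : ℝ × ℝ => p.1 + p.2) ∘ (fun ω => (X ω, Y ω)) from rfl,
    ← Measure.map_map measurable_add (hX.prodMk hY), hp, hmX, hmY, gaussianReal_conv_aux]

lemma iIndepFun_pair_aux {α β : Type*} [MeasurableSpace α] [MeasurableSpace β] {N : ℕ}
    {X : Fin N → Ω → α} {Y : Fin N → Ω → β}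
    (hX : ∀ i, Measurable (X i)) (hY : ∀ i, Measurable (Y i))
    (hXi : iIndepFun X ℙ)
    (hYi : iIndepFun Y ℙ)
    (hXY : IndepFun (fun ω (i : Fin N) => X i ω) (fun ω (i : Fin N) => Y i ω) ℙ) :
    iIndepFun (fun i ω => (X i ω, Y i ω)) ℙ := by
  classical
  set pis : Fin N → Set (Set Ω) := fun i =>
    Set.image2 (fun A B => X i ⁻¹' A ∩ Y i ⁻¹' B) {A | MeasurableSet A} {B | MeasurableSet B}
    with hpis
  rw [iIndepFun_iff_iIndep]
  refine iIndepSets.iIndep (fun i => ((hX i).prodMk (hY i)).comap_le) pis ?_ ?_ ?_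
  · intro i
    rintro _ ⟨A, hA, B, hB, rfl⟩ _ ⟨A', hA', B', hB', rfl⟩ -
    refine ⟨A ∩ A', hA.inter hA', B ∩ B', hB.inter hB', ?_⟩
    ext ω; simp; tauto
  · intro i
    rw [← generateFrom_prod, MeasurableSpace.comap_generateFrom]
    congr 1
    ext t
    constructor
    · rintro ⟨_, ⟨A, hA, B, hB, rfl⟩, rfl⟩
      exact ⟨A, hA, B, hB, by ext ω; simp [Set.mem_prod]⟩
    · rintro ⟨A, hA, B, hB, rfl⟩
      exact ⟨A ×ˢ B, Set.mem_image2_of_mem hA hB, by ext ω; simp [Set.mem_prod]⟩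
  · rw [iIndepSets_iff]
    intro S f H
    have key : ∀ i ∈ S, ∃ A B, MeasurableSet A ∧ MeasurableSet B
        ∧ f i = X i ⁻¹' A ∩ Y i ⁻¹' B := by
      intro i hi
      obtain ⟨A, hA, B, hB, hfi⟩ := H i hi
      exact ⟨A, B, hA, hB, hfi.symm⟩
    choose! A B hA hB hf using key
    have hXYi : ∀ i : Fin N, IndepFun (X i) (Y i) ℙ := by
      intro i
      exact hXY.comp (measurable_pi_apply i) (measurable_pi_apply i)
    have hsplit : (⋂ i ∈ S, f i)
        = ((fun ω (i : Fin N) => X i ω) ⁻¹' Set.pi ↑S A)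
          ∩ ((fun ω (i : Fin N) => Y i ω) ⁻¹' Set.pi ↑S B) := by
      ext ω
      simp only [Set.mem_iInter, Set.mem_inter_iff, Set.mem_preimage, Set.mem_pi,
        Finset.mem_coe]
      constructor
      · intro h
        refine ⟨fun i hi => ?_, fun i hi => ?_⟩
        · have := h i hi; rw [hf i hi] at this; exact this.1
        · have := h i hi; rw [hf i hi] at this; exact this.2
      · rintro ⟨h1, h2⟩ i hi
        rw [hf i hi]
        exact ⟨h1 i hi, h2 i hi⟩
    rw [hsplit]
    have hmA : MeasurableSet (Set.pi (↑S : Set (Fin N)) A) :=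
      MeasurableSet.pi (Set.to_countable _) (fun i hi => hA i hi)
    have hmB : MeasurableSet (Set.pi (↑S : Set (Fin N)) B) :=
      MeasurableSet.pi (Set.to_countable _) (fun i hi => hB i hi)
    rw [(indepFun_iff_measure_inter_preimage_eq_mul.mp hXY) _ _ hmA hmB]
    have hXpi : (fun ω (i : Fin N) => X i ω) ⁻¹' Set.pi ↑S A = ⋂ i ∈ S, X i ⁻¹' A i := by
      ext ω; simp [Set.mem_pi]
    have hYpi : (fun ω (i : Fin N) => Y i ω) ⁻¹' Set.pi ↑S B = ⋂ i ∈ S, Y i ⁻¹' B i := by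
      ext ω; simp [Set.mem_pi]
    rw [hXpi, hYpi,
      hXi.measure_inter_preimage_eq_mul S (fun i hi => hA i hi),
      hYi.measure_inter_preimage_eq_mul S (fun i hi => hB i hi),
      ← Finset.prod_mul_distrib]
    apply Finset.prod_congr rfl
    intro i hi
    rw [hf i hi, (indepFun_iff_measure_inter_preimage_eq_mul.mp (hXYi i)) _ _ (hA i hi) (hB i hi)]

lemma kalman_matrix_identity_aux {n m : ℕ} {Q : Matrix (Fin n) (Fin n) ℝ} (hQ : Q.PosSemidef)
    {R : Matrix (Fin m) (Fin m) ℝ} (hR : R.PosDef)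
    (A : Matrix (Fin n) (Fin n) ℝ) (H : Matrix (Fin m) (Fin n) ℝ)
    {Qf : Matrix (Fin n) (Fin n) ℝ} (hQf : Qf = A * Q * Aᵀ)
    {L : Matrix (Fin n) (Fin m) ℝ} (hL : L = Qf * Hᵀ * (H * Qf * Hᵀ + R)⁻¹) :
    ((1 - L * H) * A) * Q * ((1 - L * H) * A)ᵀ + L * R * Lᵀ = (1 - L * H) * Qf := by
  have hQfpsd : (H * Qf * Hᵀ).PosSemidef := by
    have := hQ.mul_mul_conjTranspose_same (H * A)
    simp only [conjTranspose_eq_transpose_of_trivial, transpose_mul] at this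
    rw [hQf]
    convert this using 1
    simp only [Matrix.mul_assoc]
  have hS : (H * Qf * Hᵀ + R).PosDef := Matrix.PosDef.posSemidef_add hQfpsd hR
  have hdet : IsUnit (H * Qf * Hᵀ + R).det := hS.det_pos.ne'.isUnit
  have hLS : L * (H * Qf * Hᵀ + R) = Qf * Hᵀ := by
    rw [hL, Matrix.mul_assoc, Matrix.nonsing_inv_mul _ hdet, Matrix.mul_one]
  have h2 : (1 - L * H) * Qf * Hᵀ = L * R := by
    have e : Qf * Hᵀ = L * (H * Qf * Hᵀ) + L * R := by rw [← Matrix.mul_add, hLS]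
    rw [Matrix.sub_mul, Matrix.sub_mul, Matrix.one_mul, e, Matrix.mul_assoc L H Qf,
      Matrix.mul_assoc L (H * Qf) Hᵀ, add_sub_cancel_left]
  have h1 : ((1 - L * H) * A) * Q * ((1 - L * H) * A)ᵀ
      = (1 - L * H) * Qf * (1 - L * H)ᵀ := by
    rw [hQf, transpose_mul]
    simp only [Matrix.mul_assoc]
  rw [h1, show (1 - L * H)ᵀ = 1 - Hᵀ * Lᵀ by simp [transpose_sub, transpose_mul],
    Matrix.mul_sub, Matrix.mul_one, ← Matrix.mul_assoc ((1 - L * H) * Qf) Hᵀ Lᵀ, h2,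
    sub_add_cancel]

lemma measurable_linfun_aux {k : ℕ} (a : Fin k → ℝ) :
    Measurable (fun x : Fin k → ℝ => ∑ j, a j * x j) :=
  Finset.measurable_sum (f := fun j (x : Fin k → ℝ) => a j * x j) _ (fun j _ => by fun_prop)

lemma measurable_mulVec_aux {k l : ℕ} (M : Matrix (Fin k) (Fin l) ℝ) :
    Measurable (fun v : Fin l → ℝ => M.mulVec v) := by
  apply measurable_pi_lambda
  intro j
  simp only [Matrix.mulVec, dotProduct]
  exact Finset.measurable_sum (f := fun x (c : Fin l → ℝ) => M j x * c x) _ (fun x _ => by fun_prop)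

lemma quad_dotProduct_aux {k k' : ℕ} (B : Matrix (Fin k) (Fin k') ℝ)
    (C : Matrix (Fin k') (Fin k') ℝ) (x : Fin k → ℝ) :
    x ⬝ᵥ (B * C * Bᵀ) *ᵥ x = (Matrix.vecMul x B) ⬝ᵥ C *ᵥ (Matrix.vecMul x B) := by
  rw [← Matrix.mulVec_mulVec, ← Matrix.mulVec_mulVec, Matrix.dotProduct_mulVec,
    Matrix.mulVec_transpose]

end Aux

/-- Applying the Kalman filter analysis step with the exact gain `L` to
i.i.d. Gaussian ensemble members `U_i ~ N(u, Q)`, with independently perturbed data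
`D_i ~ N(d, R)`, produces i.i.d. members `U_i' ~ N(u', Q')` where `u'` and `Q'` are the
Kalman filter posterior mean and covariance. -/
theorem analysis_ensemble_iid_gaussian
    {n m N : ℕ} (U : Fin N → Ω → Fin n → ℝ) (D : Fin N → Ω → Fin m → ℝ)
    (u : Fin n → ℝ) (Q : Matrix (Fin n) (Fin n) ℝ) (hQ : Q.PosSemidef)
    (d : Fin m → ℝ) (R : Matrix (Fin m) (Fin m) ℝ) (hR : R.PosDef)
    (hUmeas : ∀ i, Measurable (U i)) (hDmeas : ∀ i, Measurable (D i))
    (hUindep : iIndepFun U ℙ)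
    (hUdist : ∀ i, IsGaussianVec (Measure.map (U i) ℙ) u Q)
    (hDindep : iIndepFun D ℙ)
    (hDdist : ∀ i, IsGaussianVec (Measure.map (D i) ℙ) d R)
    (hUD : IndepFun (fun ω (i : Fin N) => U i ω) (fun ω (i : Fin N) => D i ω) ℙ)
    (A : Matrix (Fin n) (Fin n) ℝ) (b : Fin n → ℝ) (H : Matrix (Fin m) (Fin n) ℝ)
    (Uf : Fin N → Ω → Fin n → ℝ) (hUf : ∀ i ω, Uf i ω = A.mulVec (U i ω) + b)
    (uf : Fin n → ℝ) (huf : uf = A.mulVec u + b)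
    (Qf : Matrix (Fin n) (Fin n) ℝ) (hQf : Qf = A * Q * Aᵀ)
    (L : Matrix (Fin n) (Fin m) ℝ) (hL : L = Qf * Hᵀ * (H * Qf * Hᵀ + R)⁻¹)
    (U' : Fin N → Ω → Fin n → ℝ)
    (hU' : ∀ i ω, U' i ω = Uf i ω + L.mulVec (D i ω - H.mulVec (Uf i ω))) :
    iIndepFun U' ℙ ∧
      ∀ i, IsGaussianVec (Measure.map (U' i) ℙ)
        (uf + L.mulVec (d - H.mulVec uf)) ((1 - L * H) * Qf) := by
  classical
  have hmg : Measurable (fun p : (Fin n → ℝ) × (Fin m → ℝ) =>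
      (A.mulVec p.1 + b) + L.mulVec (p.2 - H.mulVec (A.mulVec p.1 + b))) := by
    have h1 : Measurable fun p : (Fin n → ℝ) × (Fin m → ℝ) => A.mulVec p.1 + b :=
      ((measurable_mulVec_aux A).comp measurable_fst).add measurable_const
    exact h1.add ((measurable_mulVec_aux L).comp
      (measurable_snd.sub ((measurable_mulVec_aux H).comp h1)))
  have hU'eq : (fun (i : Fin N) => (fun p : (Fin n → ℝ) × (Fin m → ℝ) =>
      (A.mulVec p.1 + b) + L.mulVec (p.2 - H.mulVec (A.mulVec p.1 + b)))
        ∘ (fun ω => (U i ω, D i ω))) = U' := by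
    funext i ω
    simp only [Function.comp_apply]
    rw [hU' i ω, hUf i ω]
  have hU'meas : ∀ i, Measurable (U' i) := by
    intro i
    rw [← hU'eq]
    exact hmg.comp ((hUmeas i).prodMk (hDmeas i))
  have hvec : ∀ (v : Fin n → ℝ) (w : Fin m → ℝ),
      (A.mulVec v + b) + L.mulVec (w - H.mulVec (A.mulVec v + b))
        = ((1 - L * H) * A).mulVec v + (L.mulVec w + (1 - L * H).mulVec b) := by
    intro v w
    simp only [Matrix.mulVec_sub, Matrix.mulVec_add, ← Matrix.mulVec_mulVec,
      Matrix.sub_mulVec, Matrix.one_mulVec]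
    abel
  constructor
  · have hpair := iIndepFun_pair_aux hUmeas hDmeas hUindep hDindep hUD
    have hind := hpair.comp (fun _ : Fin N => fun p : (Fin n → ℝ) × (Fin m → ℝ) =>
      (A.mulVec p.1 + b) + L.mulVec (p.2 - H.mulVec (A.mulVec p.1 + b))) (fun _ => hmg)
    rw [← hU'eq]
    exact hind
  · intro i l
    set l₁ : Fin n → ℝ := Matrix.vecMul l ((1 - L * H) * A) with hl₁
    set l₂ : Fin m → ℝ := Matrix.vecMul l L with hl₂
    have hmapX : Measure.map ((fun x : Fin n → ℝ => ∑ j, l₁ j * x j) ∘ U i) ℙ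
        = gaussianReal (∑ j, l₁ j * u j) (Real.toNNReal (l₁ ⬝ᵥ Q.mulVec l₁)) := by
      have h := hUdist i l₁
      rwa [Measure.map_map (measurable_linfun_aux l₁) (hUmeas i)] at h
    have hmapY : Measure.map ((fun x : Fin m → ℝ => ∑ j, l₂ j * x j) ∘ D i) ℙ
        = gaussianReal (∑ j, l₂ j * d j) (Real.toNNReal (l₂ ⬝ᵥ R.mulVec l₂)) := by
      have h := hDdist i l₂
      rwa [Measure.map_map (measurable_linfun_aux l₂) (hDmeas i)] at h
    have hXmeas : Measurable ((fun x : Fin n → ℝ => ∑ j, l₁ j * x j) ∘ U i) :=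
      (measurable_linfun_aux l₁).comp (hUmeas i)
    have hYmeas : Measurable ((fun x : Fin m → ℝ => ∑ j, l₂ j * x j) ∘ D i) :=
      (measurable_linfun_aux l₂).comp (hDmeas i)
    have hXY : IndepFun ((fun x : Fin n → ℝ => ∑ j, l₁ j * x j) ∘ U i)
        ((fun x : Fin m → ℝ => ∑ j, l₂ j * x j) ∘ D i) ℙ := by
      have hφ : Measurable (fun x : Fin N → Fin n → ℝ => ∑ j, l₁ j * x i j) := by
        refine Finset.measurable_sum _ (fun j _ => Measurable.const_mul ?_ (l₁ j))
        exact (measurable_pi_apply j).comp (measurable_pi_apply i)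
      have hψ : Measurable (fun x : Fin N → Fin m → ℝ => ∑ j, l₂ j * x i j) := by
        refine Finset.measurable_sum _ (fun j _ => Measurable.const_mul ?_ (l₂ j))
        exact (measurable_pi_apply j).comp (measurable_pi_apply i)
      exact hUD.comp hφ hψ
    have hsum := indep_add_gaussian_aux hXmeas hYmeas hXY _ _ _ _ hmapX hmapY
    rw [Measure.map_map (measurable_linfun_aux l) (hU'meas i)]
    have hfun : ((fun x : Fin n → ℝ => ∑ j, l j * x j) ∘ U' i)
        = (fun x => x + l ⬝ᵥ (1 - L * H).mulVec b)
          ∘ (fun ω => ((fun x : Fin n → ℝ => ∑ j, l₁ j * x j) ∘ U i) ω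
            + ((fun x : Fin m → ℝ => ∑ j, l₂ j * x j) ∘ D i) ω) := by
      funext ω
      show l ⬝ᵥ (U' i ω) = _
      rw [hU' i ω, hUf i ω, hvec (U i ω) (D i ω), dotProduct_add, dotProduct_add,
        Matrix.dotProduct_mulVec, Matrix.dotProduct_mulVec]
      exact (add_assoc _ _ _).symm
    rw [hfun, ← Measure.map_map (measurable_add_const _) (hXmeas.fun_add hYmeas), hsum,
      gaussianReal_map_add_const]
    have hmean : (∑ j, l₁ j * u j) + (∑ j, l₂ j * d j) + l ⬝ᵥ (1 - L * H).mulVec b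
        = ∑ j, l j * (uf + L.mulVec (d - H.mulVec uf)) j := by
      have h1 : uf + L.mulVec (d - H.mulVec uf)
          = ((1 - L * H) * A).mulVec u + (L.mulVec d + (1 - L * H).mulVec b) := by
        rw [huf]; exact hvec u d
      have e1 : (∑ j, l₁ j * u j) = l₁ ⬝ᵥ u := rfl
      have e2 : (∑ j, l₂ j * d j) = l₂ ⬝ᵥ d := rfl
      have e3 : (∑ j, l j * (uf + L.mulVec (d - H.mulVec uf)) j)
          = l ⬝ᵥ (uf + L.mulVec (d - H.mulVec uf)) := rfl
      rw [e1, e2, e3, h1, dotProduct_add, dotProduct_add, Matrix.dotProduct_mulVec,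
        Matrix.dotProduct_mulVec, Matrix.dotProduct_mulVec, ← hl₁, ← hl₂, ← add_assoc]
    have hvar : Real.toNNReal (l₁ ⬝ᵥ Q.mulVec l₁) + Real.toNNReal (l₂ ⬝ᵥ R.mulVec l₂)
        = Real.toNNReal (l ⬝ᵥ ((1 - L * H) * Qf).mulVec l) := by
      have ha : 0 ≤ l₁ ⬝ᵥ Q.mulVec l₁ := by simpa using hQ.dotProduct_mulVec_nonneg l₁
      have hb : 0 ≤ l₂ ⬝ᵥ R.mulVec l₂ := by simpa using hR.posSemidef.dotProduct_mulVec_nonneg l₂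
      rw [← Real.toNNReal_add ha hb]
      congr 1
      rw [← kalman_matrix_identity_aux hQ hR A H hQf hL, Matrix.add_mulVec, dotProduct_add,
        quad_dotProduct_aux, quad_dotProduct_aux, ← hl₁, ← hl₂]
    rw [hmean, hvar]
end
end

section
/- Let H ∈ ℝ^{m×n}, let R ∈ ℝ^{m×m} be symmetric positive definite, let Q be a random symmetric positive semidefinite n×n matrix with ‖Q‖_p < ∞ for some p ∈ [1, ∞), and let K = Q H^T (H Q H^T + R)^{-1}. Then ‖K‖_p ≤ ‖H‖ ‖R^{-1}‖ ‖Q‖_p. -/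
open MeasureTheory ProbabilityTheory Matrix Filter
open scoped ENNReal NNReal

noncomputable section

variable {Ω : Type*} [MeasureSpace Ω] [IsProbabilityMeasure (ℙ : Measure Ω)]

-- Auxiliary lemmas
lemma opCLM_apply' {m n : ℕ} (M : Matrix (Fin m) (Fin n) ℝ) (v : EuclideanSpace ℝ (Fin n)) :
    opCLM M v = toEuc (M *ᵥ (WithLp.equiv 2 (Fin n → ℝ) v)) := by
  simp [opCLM, toEuc, Matrix.toEuclideanLin_apply]

lemma opCLM_apply {m n : ℕ} (M : Matrix (Fin m) (Fin n) ℝ) (v : Fin n → ℝ) :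
    opCLM M (toEuc v) = toEuc (M *ᵥ v) := by
  simp [opCLM_apply', toEuc]

lemma inner_toEuc {n : ℕ} (u v : Fin n → ℝ) : (inner ℝ (toEuc u) (toEuc v) : ℝ) = u ⬝ᵥ v := by
  simp [PiLp.inner_apply, toEuc, dotProduct, RCLike.inner_apply, mul_comm]

lemma norm_toEuc_sq {n : ℕ} (v : Fin n → ℝ) : ‖toEuc v‖ ^ 2 = v ⬝ᵥ v := by
  rw [← real_inner_self_eq_norm_sq, inner_toEuc]

open scoped MatrixOrder in
lemma psd_cs {m : ℕ} {M : Matrix (Fin m) (Fin m) ℝ} (hM : M.PosSemidef) (u v : Fin m → ℝ) :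
    (u ⬝ᵥ M *ᵥ v) ^ 2 ≤ (u ⬝ᵥ M *ᵥ u) * (v ⬝ᵥ M *ᵥ v) := by
  obtain ⟨B, hB⟩ := CStarAlgebra.nonneg_iff_eq_star_mul_self.mp hM.nonneg
  rw [star_eq_conjTranspose] at hB
  subst hB
  have key : ∀ a b : Fin m → ℝ, a ⬝ᵥ (Bᴴ * B) *ᵥ b = (B *ᵥ a) ⬝ᵥ (B *ᵥ b) := by
    intro a b
    rw [← Matrix.mulVec_mulVec, Matrix.dotProduct_mulVec a Bᴴ,
      Matrix.conjTranspose_eq_transpose_of_trivial, Matrix.vecMul_transpose]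
  rw [key, key, key]
  have h1 : (B *ᵥ u) ⬝ᵥ (B *ᵥ v) = inner ℝ (toEuc (B *ᵥ u)) (toEuc (B *ᵥ v)) :=
    (inner_toEuc _ _).symm
  have h2 := abs_real_inner_le_norm (toEuc (B *ᵥ u)) (toEuc (B *ᵥ v))
  calc ((B *ᵥ u) ⬝ᵥ (B *ᵥ v)) ^ 2
      = |(inner ℝ (toEuc (B *ᵥ u)) (toEuc (B *ᵥ v)) : ℝ)| ^ 2 := by rw [← h1, sq_abs]
    _ ≤ (‖toEuc (B *ᵥ u)‖ * ‖toEuc (B *ᵥ v)‖) ^ 2 := by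
        exact pow_le_pow_left₀ (abs_nonneg _) h2 2
    _ = ((B *ᵥ u) ⬝ᵥ (B *ᵥ u)) * ((B *ᵥ v) ⬝ᵥ (B *ᵥ v)) := by
        rw [mul_pow, norm_toEuc_sq, norm_toEuc_sq]

lemma opCLM_mul {l m n : ℕ} (A : Matrix (Fin l) (Fin m) ℝ) (B : Matrix (Fin m) (Fin n) ℝ) :
    opCLM (A * B) = (opCLM A).comp (opCLM B) := by
  ext1 x
  simp [opCLM_apply', ContinuousLinearMap.comp_apply, toEuc, Matrix.mulVec_mulVec]

lemma norm_opCLM_transpose {m n : ℕ} (H : Matrix (Fin m) (Fin n) ℝ) :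
    ‖opCLM Hᵀ‖ = ‖opCLM H‖ := by
  rw [← Matrix.conjTranspose_eq_transpose_of_trivial]
  show ‖LinearMap.toContinuousLinearMap (Matrix.toEuclideanLin Hᴴ)‖ = _
  rw [Matrix.toEuclideanLin_conjTranspose_eq_adjoint,
    LinearMap.adjoint_toContinuousLinearMap]
  exact ContinuousLinearMap.adjoint.norm_map _

/-- Key bound: if `R` is posdef, `S` posdef with `S - R` psd, then `‖S⁻¹‖ ≤ ‖R⁻¹‖`. -/
lemma norm_opCLM_inv_le {m : ℕ} {R S : Matrix (Fin m) (Fin m) ℝ}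
    (hR : R.PosDef) (hS : S.PosDef) (hle : (S - R).PosSemidef) :
    ‖opCLM S⁻¹‖ ≤ ‖opCLM R⁻¹‖ := by
  refine ContinuousLinearMap.opNorm_le_bound _ (norm_nonneg _) fun y => ?_
  set y' : Fin m → ℝ := WithLp.equiv 2 (Fin m → ℝ) y with hy'
  have hyy : y = toEuc y' := rfl
  set u : Fin m → ℝ := S⁻¹ *ᵥ y' with hu
  have hSu : S *ᵥ u = y' := by
    rw [hu, Matrix.mulVec_mulVec, Matrix.mul_nonsing_inv _ hS.det_pos.ne'.isUnit,
      Matrix.one_mulVec]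
  set c : ℝ := ‖opCLM R⁻¹‖ with hc
  have hc0 : 0 ≤ c := norm_nonneg _
  set N : ℝ := ‖toEuc u‖ with hN
  have hN0 : 0 ≤ N := norm_nonneg _
  have hNsq : N ^ 2 = u ⬝ᵥ u := norm_toEuc_sq u
  -- Step 1: u ⬝ᵥ u ≤ c * (u ⬝ᵥ R *ᵥ u)
  have hRinv : (R⁻¹).PosSemidef := hR.inv.posSemidef
  have hid : R⁻¹ *ᵥ (R *ᵥ u) = u := by
    rw [Matrix.mulVec_mulVec, Matrix.nonsing_inv_mul _ hR.det_pos.ne'.isUnit,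
      Matrix.one_mulVec]
  have h1 : u ⬝ᵥ u = u ⬝ᵥ R⁻¹ *ᵥ (R *ᵥ u) := by rw [hid]
  have hcs := psd_cs hRinv u (R *ᵥ u)
  have h2 : (R *ᵥ u) ⬝ᵥ R⁻¹ *ᵥ (R *ᵥ u) = u ⬝ᵥ R *ᵥ u := by
    rw [hid, dotProduct_comm]
  have h3 : u ⬝ᵥ R⁻¹ *ᵥ u ≤ c * N ^ 2 := by
    have := real_inner_le_norm (toEuc u) (toEuc (R⁻¹ *ᵥ u))
    rw [inner_toEuc] at this
    have h4 : ‖toEuc (R⁻¹ *ᵥ u)‖ ≤ c * N := by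
      have := (opCLM R⁻¹).le_opNorm (toEuc u)
      rwa [opCLM_apply] at this
    nlinarith
  have ha0 : 0 ≤ u ⬝ᵥ R *ᵥ u := by
    have := hR.posSemidef.dotProduct_mulVec_nonneg u
    simpa using this
  have step1 : u ⬝ᵥ u ≤ c * (u ⬝ᵥ R *ᵥ u) := by
    rw [h2] at hcs
    rw [← h1] at hcs
    -- hcs : (u ⬝ᵥ u)^2 ≤ (u ⬝ᵥ R⁻¹ *ᵥ u) * (u ⬝ᵥ R *ᵥ u)
    rcases eq_or_lt_of_le (by nlinarith : (0:ℝ) ≤ u ⬝ᵥ u) with h | h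
    · rw [← h]; positivity
    · nlinarith
  -- Step 2: u ⬝ᵥ R *ᵥ u ≤ u ⬝ᵥ S *ᵥ u = u ⬝ᵥ y'
  have step2 : u ⬝ᵥ R *ᵥ u ≤ u ⬝ᵥ y' := by
    have := hle.dotProduct_mulVec_nonneg u
    simp only [star_trivial, Matrix.sub_mulVec, dotProduct_sub] at this
    rw [hSu] at this
    linarith
  -- Step 3: u ⬝ᵥ y' ≤ N * ‖y‖
  have step3 : u ⬝ᵥ y' ≤ N * ‖y‖ := by
    have := real_inner_le_norm (toEuc u) (toEuc y')
    rw [inner_toEuc] at this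
    rwa [← hyy] at this
  have hfin : N ^ 2 ≤ c * (N * ‖y‖) := by
    calc N ^ 2 = u ⬝ᵥ u := hNsq
      _ ≤ c * (u ⬝ᵥ R *ᵥ u) := step1
      _ ≤ c * (u ⬝ᵥ y') := by exact mul_le_mul_of_nonneg_left step2 hc0
      _ ≤ c * (N * ‖y‖) := mul_le_mul_of_nonneg_left step3 hc0
  have hgoal : N ≤ c * ‖y‖ := by
    rcases eq_or_lt_of_le hN0 with h | h
    · rw [← h]; positivity
    · nlinarith
  calc ‖opCLM S⁻¹ y‖ = N := by rw [hyy, opCLM_apply]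
    _ ≤ c * ‖y‖ := hgoal
/-- `L^p` bound on the gain. For a random symmetric positive semidefinite
matrix `Q` with `‖Q‖_p < ∞` and `K = Q Hᵀ (H Q Hᵀ + R)⁻¹`,
`‖K‖_p ≤ ‖H‖ ‖R⁻¹‖ ‖Q‖_p`. -/
theorem mLp_gain_le {n m : ℕ}
    (H : Matrix (Fin m) (Fin n) ℝ) (R : Matrix (Fin m) (Fin m) ℝ) (hR : R.PosDef)
    (Q : Ω → Matrix (Fin n) (Fin n) ℝ) (hQpsd : ∀ ω, (Q ω).PosSemidef)
    (p : ℝ) (hp : 1 ≤ p) (hQfin : mLp p Q < ⊤)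
    (K : Ω → Matrix (Fin n) (Fin m) ℝ)
    (hK : ∀ ω, K ω = Q ω * Hᵀ * (H * Q ω * Hᵀ + R)⁻¹) :
    mLp p K ≤ ENNReal.ofReal (‖opCLM H‖ * ‖opCLM R⁻¹‖) * mLp p Q := by
  set C : ℝ := ‖opCLM H‖ * ‖opCLM R⁻¹‖ with hC
  have hC0 : 0 ≤ C := mul_nonneg (norm_nonneg _) (norm_nonneg _)
  have hpt : ∀ ω, ‖opCLM (K ω)‖ ≤ C * ‖opCLM (Q ω)‖ := by
    intro ω
    set S : Matrix (Fin m) (Fin m) ℝ := H * Q ω * Hᵀ + R with hSdef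
    have hHQH : (H * Q ω * Hᵀ).PosSemidef := by
      have := (hQpsd ω).mul_mul_conjTranspose_same H
      rwa [Matrix.conjTranspose_eq_transpose_of_trivial] at this
    have hS : S.PosDef := by
      have := hR.add_posSemidef hHQH
      rwa [add_comm] at this
    have hle : (S - R).PosSemidef := by
      have : S - R = H * Q ω * Hᵀ := by rw [hSdef]; exact add_sub_cancel_right _ _
      rwa [this]
    have hinv : ‖opCLM S⁻¹‖ ≤ ‖opCLM R⁻¹‖ := norm_opCLM_inv_le hR hS hle
    calc ‖opCLM (K ω)‖ = ‖opCLM (Q ω * Hᵀ * S⁻¹)‖ := by rw [hK ω]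
      _ ≤ ‖opCLM (Q ω * Hᵀ)‖ * ‖opCLM S⁻¹‖ := by
          rw [opCLM_mul]; exact ContinuousLinearMap.opNorm_comp_le _ _
      _ ≤ ‖opCLM (Q ω)‖ * ‖opCLM Hᵀ‖ * ‖opCLM S⁻¹‖ := by
          have h := ContinuousLinearMap.opNorm_comp_le (opCLM (Q ω)) (opCLM Hᵀ)
          rw [← opCLM_mul] at h
          exact mul_le_mul_of_nonneg_right h (norm_nonneg _)
      _ ≤ ‖opCLM (Q ω)‖ * ‖opCLM H‖ * ‖opCLM R⁻¹‖ := by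
          rw [norm_opCLM_transpose]
          exact mul_le_mul_of_nonneg_left hinv (by positivity)
      _ = C * ‖opCLM (Q ω)‖ := by ring
  have key := eLpNorm_le_nnreal_smul_eLpNorm_of_ae_le_mul
    (μ := (ℙ : Measure Ω)) (f := fun ω => opCLM (K ω)) (g := fun ω => opCLM (Q ω))
    (c := C.toNNReal)
    (Filter.Eventually.of_forall fun ω => by
      rw [← NNReal.coe_le_coe, NNReal.coe_mul, coe_nnnorm, coe_nnnorm,
        Real.coe_toNNReal C hC0]
      exact hpt ω)
    (ENNReal.ofReal p)
  have hof : ENNReal.ofReal C = (C.toNNReal : ℝ≥0∞) := rfl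
  rw [hof]
  simpa [mLp, ENNReal.smul_def] using key
end
end
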